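/- arXiv:2301.03576 — 7 statements merged into one kernel-verified Lean document; each statement's English description precedes it below -/
import Mathlib

section
/- Let E be a finite-dimensional real inner product space, f : E → ℝ continuously differentiable, h : E → ℝ twice continuously differentiable and strictly convex, μ ≥ 0, and α, β, γ : (0,∞) → ℝ continuously differentiable satisfying the first ideal scaling condition γ̇(t) = e^{α(t)} for all t > 0. Then a twice continuously differentiable curve X : (0,∞) → E satisfies the Euler–Lagrange equation d/dt[∇_v L(X(t), Ẋ(t), t)] = ∇_x L(X(t), Ẋ(t), t) for all t > 0 if and only if the curve Z(t) := X(t) + e^{−α(t)}·Ẋ(t) satisfies d/dt[∇h(Z(t))] = (μ·β̇(t)·e^{β(t)}/(1 + μ·e^{β(t)}))·(∇h(X(t)) − ∇h(Z(t))) − (e^{α(t)+β(t)}/(1 + μ·e^{β(t)}))·∇f(X(t)) for all t > 0. -/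
open scoped RealInnerProductSpace

/-- The Bregman divergence `D_h(y, x) = h(y) − h(x) − ⟨∇h(x), y − x⟩`. -/
noncomputable def breg {E : Type*} [NormedAddCommGroup E] [InnerProductSpace ℝ E]
    [CompleteSpace E] (h : E → ℝ) (y x : E) : ℝ :=
  h y - h x - ⟪gradient h x, y - x⟫

section Aux
open InnerProductSpace

variable {E : Type*} [NormedAddCommGroup E] [InnerProductSpace ℝ E] [CompleteSpace E]

lemma hga_const_mul {h : E → ℝ} {G x : E} (hG : HasGradientAt h G x) (c : ℝ) :
    HasGradientAt (fun y => c * h y) (c • G) x := by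
  rw [hasGradientAt_iff_hasFDerivAt] at *
  rw [map_smul]; exact hG.const_mul c

lemma hga_add {h g : E → ℝ} {G H x : E} (hG : HasGradientAt h G x)
    (hH : HasGradientAt g H x) : HasGradientAt (fun y => h y + g y) (G + H) x := by
  rw [hasGradientAt_iff_hasFDerivAt] at *
  rw [map_add]; exact hG.add hH

lemma hga_sub {h g : E → ℝ} {G H x : E} (hG : HasGradientAt h G x)
    (hH : HasGradientAt g H x) : HasGradientAt (fun y => h y - g y) (G - H) x := by
  rw [hasGradientAt_iff_hasFDerivAt] at *
  rw [map_sub]; exact hG.sub hH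

lemma hga_inner_const (g x : E) : HasGradientAt (fun v : E => ⟪g, v⟫) g x := by
  rw [hasGradientAt_iff_hasFDerivAt]
  exact (toDual ℝ E g).hasFDerivAt

lemma hga_comp_affine {h : E → ℝ} {G : E} (c : E) (s : ℝ) (v0 : E)
    (hG : HasGradientAt h G (c + s • v0)) :
    HasGradientAt (fun v => h (c + s • v)) (s • G) v0 := by
  rw [hasGradientAt_iff_hasFDerivAt] at *
  have haff : HasFDerivAt (fun v : E => c + s • v)
      (s • (ContinuousLinearMap.id ℝ E)) v0 :=
    by exact ((hasFDerivAt_id (𝕜 := ℝ) v0).const_smul s).const_add c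
  have := hG.comp v0 haff
  refine this.congr_fderiv ?_
  ext y
  simp [toDual_apply_apply, real_inner_smul_left, real_inner_smul_right]

example : ((toDual ℝ E).symm.toContinuousLinearEquiv : StrongDual ℝ E ≃L[ℝ] E) = ((toDual ℝ E).symm.toContinuousLinearEquiv) := rfl

example (a b : ℝ) (x y : E) : (a+b) • x - b • x = a • x := by match_scalars; ring

lemma hga_translate {h : E → ℝ} {G : E} (w x0 : E) (hG : HasGradientAt h G (x0 + w)) :
    HasGradientAt (fun x => h (x + w)) G x0 := by
  have := hga_comp_affine (h := h) w 1 x0 (by simpa [add_comm] using hG)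
  simpa [add_comm] using this

noncomputable def dualSymmCLM (E : Type*) [NormedAddCommGroup E] [InnerProductSpace ℝ E]
    [CompleteSpace E] : StrongDual ℝ E →L[ℝ] E :=
  ((toDual ℝ E).symm.toContinuousLinearEquiv : StrongDual ℝ E ≃L[ℝ] E).toContinuousLinearMap

lemma dualSymmCLM_apply (A : StrongDual ℝ E) :
    dualSymmCLM E A = (toDual ℝ E).symm A := rfl

lemma hasFDerivAt_gradient {h : E → ℝ} (hh : ContDiff ℝ 2 h) (x : E) :
    HasFDerivAt (gradient h)
      ((dualSymmCLM E).comp (fderiv ℝ (fderiv ℝ h) x)) x := by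
  have hd2 : DifferentiableAt ℝ (fderiv ℝ h) x :=
    ((hh.fderiv_right le_rfl).differentiable one_ne_zero).differentiableAt
  have := ((dualSymmCLM E).hasFDerivAt).comp x hd2.hasFDerivAt
  have hfun : gradient h = (dualSymmCLM E) ∘ (fderiv ℝ h) := by
    funext y; simp [gradient, dualSymmCLM_apply]
  rw [hfun]; exact this

lemma fderiv_gradient_apply {h : E → ℝ} (hh : ContDiff ℝ 2 h) (x u : E) :
    fderiv ℝ (gradient h) x u = (toDual ℝ E).symm (fderiv ℝ (fderiv ℝ h) x u) := by
  rw [(hasFDerivAt_gradient hh x).fderiv, ContinuousLinearMap.comp_apply, dualSymmCLM_apply]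

lemma inner_fderiv_gradient_symm {h : E → ℝ} (hh : ContDiff ℝ 2 h) (x u w : E) :
    ⟪fderiv ℝ (gradient h) x u, w⟫ = ⟪fderiv ℝ (gradient h) x w, u⟫ := by
  rw [fderiv_gradient_apply hh, fderiv_gradient_apply hh, toDual_symm_apply, toDual_symm_apply]
  exact second_derivative_symmetric
    (fun y => ((hh.differentiable two_ne_zero) y).hasFDerivAt)
    (((hh.fderiv_right le_rfl).differentiable one_ne_zero) x).hasFDerivAt u w

lemma hga_inner_gradient {h : E → ℝ} (hh : ContDiff ℝ 2 h) (x w : E) :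
    HasGradientAt (fun y => ⟪gradient h y, w⟫) (fderiv ℝ (gradient h) x w) x := by
  have hg : HasFDerivAt (gradient h) (fderiv ℝ (gradient h) x) x :=
    (hasFDerivAt_gradient hh x).differentiableAt.hasFDerivAt
  have h1 : HasFDerivAt (fun y => ⟪w, gradient h y⟫)
      ((innerSL ℝ w).comp (fderiv ℝ (gradient h) x)) x :=
    ((innerSL ℝ w).hasFDerivAt).comp x hg
  rw [hasGradientAt_iff_hasFDerivAt]
  have h2 : (toDual ℝ E) (fderiv ℝ (gradient h) x w)
      = (innerSL ℝ w).comp (fderiv ℝ (gradient h) x) := by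
    ext u
    simp only [toDual_apply_apply, ContinuousLinearMap.coe_comp', Function.comp_apply, innerSL_apply_apply]
    rw [inner_fderiv_gradient_symm hh, real_inner_comm]
  rw [h2]
  simpa [real_inner_comm] using h1

lemma grad_v_formula {h : E → ℝ} (hh : Differentiable ℝ h) (A B s : ℝ) (x v0 : E) :
    gradient (fun v => A * (h (x + s • v) - h x - ⟪gradient h x, (x + s • v) - x⟫) - B) v0
      = (A * s) • (gradient h (x + s • v0) - gradient h x) := by
  have h1 : HasGradientAt (fun v : E => h (x + s • v)) (s • gradient h (x + s • v0)) v0 :=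
    hga_comp_affine x s v0 (hh (x + s • v0)).hasGradientAt
  have h5 := hga_sub (hga_const_mul h1 A)
    (hga_add (hga_const_mul (hga_inner_const (gradient h x) v0) (A * s))
      (hasGradientAt_const v0 (A * h x + B)))
  have hfun : (fun v => A * (h (x + s • v) - h x - ⟪gradient h x, (x + s • v) - x⟫) - B)
      = fun v => A * h (x + s • v) - ((A * s) * ⟪gradient h x, v⟫ + (A * h x + B)) := by
    funext v
    rw [add_sub_cancel_left, real_inner_smul_right]
    ring
  rw [hfun, h5.gradient]
  module

lemma grad_x_formula {h f : E → ℝ} (hh : ContDiff ℝ 2 h) (hf : Differentiable ℝ f)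
    (A B s : ℝ) (v0 x0 : E) :
    gradient (fun x => A * (h (x + s • v0) - h x - ⟪gradient h x, (x + s • v0) - x⟫)
        - B * f x) x0
      = A • (gradient h (x0 + s • v0) - gradient h x0
            - s • (fderiv ℝ (gradient h) x0 v0)) - B • gradient f x0 := by
  have hdh := hh.differentiable two_ne_zero
  have h1 : HasGradientAt (fun x : E => h (x + s • v0)) (gradient h (x0 + s • v0)) x0 :=
    hga_translate (s • v0) x0 (hdh _).hasGradientAt
  have H := hga_sub (hga_const_mul h1 A)
    (hga_add (hga_add (hga_const_mul (hdh x0).hasGradientAt A)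
        (hga_const_mul (hga_inner_gradient hh x0 v0) (A * s)))
      (hga_const_mul (hf x0).hasGradientAt B))
  have hfun : (fun x => A * (h (x + s • v0) - h x - ⟪gradient h x, (x + s • v0) - x⟫)
        - B * f x)
      = fun x => A * h (x + s • v0)
          - (A * h x + (A * s) * ⟪gradient h x, v0⟫ + B * f x) := by
    funext x
    rw [add_sub_cancel_left, real_inner_smul_right]
    ring
  rw [hfun, H.gradient]
  module

end Aux

/-- On `(0,∞)`, under the first ideal scaling condition `γ̇ = e^α`, a twice continuously
differentiable curve `X` satisfies the Euler–Lagrange equation for the unified Bregman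
Lagrangian if and only if `Z(t) = X(t) + e^{−α(t)}·Ẋ(t)` satisfies the unified Bregman
Lagrangian flow equation. -/
theorem unified_bregman_lagrangian_euler_lagrange
    {E : Type*} [NormedAddCommGroup E] [InnerProductSpace ℝ E] [FiniteDimensional ℝ E]
    (f h : E → ℝ) (hf : ContDiff ℝ 1 f) (hh : ContDiff ℝ 2 h)
    (hhstrict : StrictConvexOn ℝ Set.univ h)
    (μ : ℝ) (hμ : 0 ≤ μ)
    (α β γ : ℝ → ℝ)
    (hα : ContDiffOn ℝ 1 α (Set.Ioi 0))
    (hβ : ContDiffOn ℝ 1 β (Set.Ioi 0))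
    (hγ : ContDiffOn ℝ 1 γ (Set.Ioi 0))
    (hscaling : ∀ t ∈ Set.Ioi (0 : ℝ), HasDerivAt γ (Real.exp (α t)) t)
    (L : E → E → ℝ → ℝ)
    (hL : ∀ x v t, L x v t =
      Real.exp (α t + γ t) * ((1 + μ * Real.exp (β t)) * breg h (x + Real.exp (-α t) • v) x
        - Real.exp (β t) * f x))
    (X : ℝ → E) (hX : ContDiffOn ℝ 2 X (Set.Ioi 0))
    (Z : ℝ → E) (hZ : ∀ t, Z t = X t + Real.exp (-α t) • deriv X t) :
    (∀ t ∈ Set.Ioi (0 : ℝ),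
        HasDerivAt (fun τ => gradient (fun v => L (X τ) v τ) (deriv X τ))
          (gradient (fun x => L x (deriv X t) t) (X t)) t)
      ↔
    (∀ t ∈ Set.Ioi (0 : ℝ),
        HasDerivAt (fun τ => gradient h (Z τ))
          ((μ * deriv β t * Real.exp (β t) / (1 + μ * Real.exp (β t))) •
              (gradient h (X t) - gradient h (Z t))
            - (Real.exp (α t + β t) / (1 + μ * Real.exp (β t))) • gradient f (X t)) t) := by
  have hdh : Differentiable ℝ h := hh.differentiable two_ne_zero
  have hdf : Differentiable ℝ f := hf.differentiable one_ne_zero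
  have hcpos : ∀ τ : ℝ, 0 < Real.exp (γ τ) * (1 + μ * Real.exp (β τ)) := by
    intro τ
    have h0 : 0 ≤ μ * Real.exp (β τ) := by positivity
    positivity
  have key1 : (fun τ => gradient (fun v => L (X τ) v τ) (deriv X τ))
      = fun τ => (Real.exp (γ τ) * (1 + μ * Real.exp (β τ))) •
          (gradient h (Z τ) - gradient h (X τ)) := by
    funext τ
    have hfun : (fun v => L (X τ) v τ)
        = fun v => (Real.exp (α τ + γ τ) * (1 + μ * Real.exp (β τ)))
            * (h (X τ + Real.exp (-α τ) • v) - h (X τ)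
              - ⟪gradient h (X τ), (X τ + Real.exp (-α τ) • v) - X τ⟫)
          - (Real.exp (α τ + γ τ) * (Real.exp (β τ) * f (X τ))) := by
      funext v
      rw [hL]
      simp only [breg]
      ring
    rw [hfun, grad_v_formula hdh, ← hZ τ]
    congr 1
    rw [Real.exp_add, Real.exp_neg]
    field_simp
  constructor
  · intro H t ht
    have hXd : HasDerivAt X (deriv X t) t :=
      ((hX.contDiffAt (Ioi_mem_nhds ht)).differentiableAt two_ne_zero).hasDerivAt
    have hβd : HasDerivAt β (deriv β t) t :=
      ((hβ.contDiffAt (Ioi_mem_nhds ht)).differentiableAt one_ne_zero).hasDerivAt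
    have hP : HasDerivAt (fun τ => gradient h (X τ))
        (fderiv ℝ (gradient h) (X t) (deriv X t)) t :=
      ((hasFDerivAt_gradient hh (X t)).differentiableAt.hasFDerivAt).comp_hasDerivAt t hXd
    have hc : HasDerivAt (fun τ => Real.exp (γ τ) * (1 + μ * Real.exp (β τ)))
        (Real.exp (γ t) * Real.exp (α t) * (1 + μ * Real.exp (β t))
          + Real.exp (γ t) * (μ * (Real.exp (β t) * deriv β t))) t :=
      ((hscaling t ht).exp).mul (((hβd.exp).const_mul μ).const_add 1)
    have key2 : gradient (fun x => L x (deriv X t) t) (X t)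
        = (Real.exp (α t + γ t) * (1 + μ * Real.exp (β t))) •
            (gradient h (Z t) - gradient h (X t)
              - Real.exp (-α t) • (fderiv ℝ (gradient h) (X t) (deriv X t)))
          - (Real.exp (α t + γ t) * Real.exp (β t)) • gradient f (X t) := by
      have hfun : (fun x => L x (deriv X t) t)
          = fun x => (Real.exp (α t + γ t) * (1 + μ * Real.exp (β t)))
              * (h (x + Real.exp (-α t) • deriv X t) - h x
                - ⟪gradient h x, (x + Real.exp (-α t) • deriv X t) - x⟫)
            - (Real.exp (α t + γ t) * Real.exp (β t)) * f x := by
        funext x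
        rw [hL]
        simp only [breg]
        ring
      rw [hfun, grad_x_formula hh hdf, ← hZ t]
    have hEL := H t ht
    rw [key1, key2] at hEL
    have hWfun : (fun τ => gradient h (Z τ))
        = fun τ => (Real.exp (γ τ) * (1 + μ * Real.exp (β τ)))⁻¹ •
            ((Real.exp (γ τ) * (1 + μ * Real.exp (β τ))) •
              (gradient h (Z τ) - gradient h (X τ))) + gradient h (X τ) := by
      funext τ
      rw [smul_smul, inv_mul_cancel₀ (hcpos τ).ne', one_smul]
      abel
    rw [hWfun]
    have hinv : HasDerivAt (fun τ => (Real.exp (γ τ) * (1 + μ * Real.exp (β τ)))⁻¹)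
        (-(Real.exp (γ t) * Real.exp (α t) * (1 + μ * Real.exp (β t))
            + Real.exp (γ t) * (μ * (Real.exp (β t) * deriv β t)))
          / (Real.exp (γ t) * (1 + μ * Real.exp (β t))) ^ 2) t :=
      hc.inv (hcpos t).ne'
    have final := (hinv.smul hEL).add hP
    refine final.congr_deriv ?_
    symm
    have h1μ : (1 : ℝ) + μ * Real.exp (β t) ≠ 0 := by
      have h0 : 0 ≤ μ * Real.exp (β t) := by positivity
      positivity
    simp only [Real.exp_add, Real.exp_neg]
    match_scalars <;> field_simp <;> ring
  · intro H t ht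
    have hXd : HasDerivAt X (deriv X t) t :=
      ((hX.contDiffAt (Ioi_mem_nhds ht)).differentiableAt two_ne_zero).hasDerivAt
    have hβd : HasDerivAt β (deriv β t) t :=
      ((hβ.contDiffAt (Ioi_mem_nhds ht)).differentiableAt one_ne_zero).hasDerivAt
    have hP : HasDerivAt (fun τ => gradient h (X τ))
        (fderiv ℝ (gradient h) (X t) (deriv X t)) t :=
      ((hasFDerivAt_gradient hh (X t)).differentiableAt.hasFDerivAt).comp_hasDerivAt t hXd
    have hc : HasDerivAt (fun τ => Real.exp (γ τ) * (1 + μ * Real.exp (β τ)))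
        (Real.exp (γ t) * Real.exp (α t) * (1 + μ * Real.exp (β t))
          + Real.exp (γ t) * (μ * (Real.exp (β t) * deriv β t))) t :=
      ((hscaling t ht).exp).mul (((hβd.exp).const_mul μ).const_add 1)
    have key2 : gradient (fun x => L x (deriv X t) t) (X t)
        = (Real.exp (α t + γ t) * (1 + μ * Real.exp (β t))) •
            (gradient h (Z t) - gradient h (X t)
              - Real.exp (-α t) • (fderiv ℝ (gradient h) (X t) (deriv X t)))
          - (Real.exp (α t + γ t) * Real.exp (β t)) • gradient f (X t) := by
      have hfun : (fun x => L x (deriv X t) t)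
          = fun x => (Real.exp (α t + γ t) * (1 + μ * Real.exp (β t)))
              * (h (x + Real.exp (-α t) • deriv X t) - h x
                - ⟪gradient h x, (x + Real.exp (-α t) • deriv X t) - x⟫)
            - (Real.exp (α t + γ t) * Real.exp (β t)) * f x := by
        funext x
        rw [hL]
        simp only [breg]
        ring
      rw [hfun, grad_x_formula hh hdf, ← hZ t]
    have hF := hc.smul ((H t ht).sub hP)
    rw [key1, key2]
    refine hF.congr_deriv ?_
    symm
    have h1μ : (1 : ℝ) + μ * Real.exp (β t) ≠ 0 := by
      have h0 : 0 ≤ μ * Real.exp (β t) := by positivity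
      positivity
    simp only [Real.exp_add, Real.exp_neg, Pi.sub_apply]
    match_scalars <;> field_simp <;> ring
end

section
/- Let E be a finite-dimensional real inner product space, μ ≥ 0, f : E → ℝ differentiable and μ-strongly convex, and x* a minimizer of f. Suppose X, Z : [0,∞) → E are continuously differentiable and satisfy, for all t > 0, Ẋ(t) = (2/t)·cothc((√μ/2)·t)·(Z(t) − X(t)) and Ż(t) = (t/2)·tanhc((√μ/2)·t)·(μ·X(t) − μ·Z(t) − ∇f(X(t))). Then the energy function 𝓔(t) = (1/2)·cosh²((√μ/2)·t)·‖Z(t) − x*‖² + (t²/4)·sinhc²((√μ/2)·t)·(f(X(t)) − f(x*)) is monotonically nonincreasing on [0,∞). -/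
open scoped RealInnerProductSpace

noncomputable def sinhc (x : ℝ) : ℝ := if x = 0 then 1 else Real.sinh x / x
noncomputable def cschc (x : ℝ) : ℝ := 1 / sinhc x
noncomputable def tanhc (x : ℝ) : ℝ := sinhc x / Real.cosh x
noncomputable def cothc (x : ℝ) : ℝ := 1 / tanhc x

lemma sinhc_pos (x : ℝ) : 0 < sinhc x := by
  unfold sinhc
  rcases lt_trichotomy x 0 with h | h | h
  · rw [if_neg h.ne]
    exact div_pos_of_neg_of_neg (by simpa using Real.sinh_neg_iff.2 h) h
  · simp [h]
  · rw [if_neg h.ne']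
    exact div_pos (Real.sinh_pos_iff.2 h) h

lemma sinhc_mul_eq {s t : ℝ} (hs : s ≠ 0) : t / 2 * sinhc (s * t) = Real.sinh (s * t) / (2 * s) := by
  unfold sinhc
  rcases eq_or_ne t 0 with rfl | ht
  · simp
  · rw [if_neg (mul_ne_zero hs ht)]
    field_simp

-- A has derivative C/2
lemma hasDerivAt_A (s t : ℝ) :
    HasDerivAt (fun t => t / 2 * sinhc (s * t)) (Real.cosh (s * t) / 2) t := by
  rcases eq_or_ne s 0 with rfl | hs
  · simp only [zero_mul, sinhc, if_pos rfl, mul_one, Real.cosh_zero]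
    simpa using (hasDerivAt_id t).div_const 2
  · have h : (fun t => t / 2 * sinhc (s * t)) = fun t => Real.sinh (s * t) / (2 * s) := by
      funext u; exact sinhc_mul_eq hs
    rw [h]
    have := ((Real.hasDerivAt_sinh (s * t)).comp t (by simpa using (hasDerivAt_id t).const_mul s)).div_const (2 * s)
    refine this.congr_deriv ?_
    field_simp

lemma hasDerivAt_C (s t : ℝ) :
    HasDerivAt (fun t => Real.cosh (s * t)) (2 * s ^ 2 * (t / 2 * sinhc (s * t))) t := by
  have h := (Real.hasDerivAt_cosh (s * t)).comp t (by simpa using (hasDerivAt_id t).const_mul s)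
  refine h.congr_deriv ?_
  rcases eq_or_ne s 0 with rfl | hs
  · simp
  · rw [sinhc_mul_eq hs]; field_simp

/-- Along the unified NAG system, the energy
`𝓔(t) = (1/2)cosh²((√μ/2)t)‖Z(t) − x*‖² + (t²/4)sinhc²((√μ/2)t)(f(X(t)) − f(x*))`
is monotonically nonincreasing on `[0, ∞)`. -/
theorem unified_nag_system_lyapunov
    {E : Type*} [NormedAddCommGroup E] [InnerProductSpace ℝ E] [FiniteDimensional ℝ E]
    (μ : ℝ) (hμ : 0 ≤ μ)
    (f : E → ℝ) (hf : Differentiable ℝ f)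
    (hsc : ∀ x y : E, f x + ⟪gradient f x, y - x⟫ + μ / 2 * ‖y - x‖ ^ 2 ≤ f y)
    (xstar : E) (hmin : ∀ x, f xstar ≤ f x)
    (X Z : ℝ → E)
    (hX : ContDiffOn ℝ 1 X (Set.Ici 0)) (hZ : ContDiffOn ℝ 1 Z (Set.Ici 0))
    (hflow1 : ∀ t > (0 : ℝ),
      HasDerivAt X ((2 / t * cothc (Real.sqrt μ / 2 * t)) • (Z t - X t)) t)
    (hflow2 : ∀ t > (0 : ℝ),
      HasDerivAt Z ((t / 2 * tanhc (Real.sqrt μ / 2 * t)) •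
        (μ • X t - μ • Z t - gradient f (X t))) t) :
    AntitoneOn (fun t =>
      1 / 2 * Real.cosh (Real.sqrt μ / 2 * t) ^ 2 * ‖Z t - xstar‖ ^ 2
        + t ^ 2 / 4 * sinhc (Real.sqrt μ / 2 * t) ^ 2 * (f (X t) - f xstar))
      (Set.Ici 0) := by
  set s : ℝ := Real.sqrt μ / 2 with hs_def
  -- rewrite the energy in terms of A t := t/2 * sinhc (s*t)
  have hfun : (fun t =>
      1 / 2 * Real.cosh (s * t) ^ 2 * ‖Z t - xstar‖ ^ 2
        + t ^ 2 / 4 * sinhc (s * t) ^ 2 * (f (X t) - f xstar))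
      = (fun t => 1 / 2 * (Real.cosh (s * t) ^ 2 * ‖Z t - xstar‖ ^ 2)
        + (t / 2 * sinhc (s * t)) ^ 2 * (f (X t) - f xstar)) := by
    funext t; ring
  rw [hfun]
  -- key derivative computation
  have hμs : μ = (2 * s) ^ 2 := by
    rw [hs_def]; rw [mul_div_cancel₀ _ (two_ne_zero)]; exact (Real.sq_sqrt hμ).symm
  have key : ∀ t ∈ Set.Ioi (0 : ℝ), HasDerivAt
      (fun u => 1 / 2 * (Real.cosh (s * u) ^ 2 * ‖Z u - xstar‖ ^ 2)
        + (u / 2 * sinhc (s * u)) ^ 2 * (f (X u) - f xstar))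
      (Real.cosh (s * t) * (t / 2 * sinhc (s * t)) *
        (μ / 2 * ‖Z t - xstar‖ ^ 2
          + (μ * ⟪X t - Z t, Z t - xstar⟫ - ⟪gradient f (X t), Z t - xstar⟫)
          + ((f (X t) - f xstar) + ⟪gradient f (X t), Z t - X t⟫))) t := by
    intro t ht
    have ht0 : (0:ℝ) < t := ht
    have hA0 : (0:ℝ) < t / 2 * sinhc (s * t) :=
      mul_pos (by linarith) (sinhc_pos _)
    have hC0 : (0:ℝ) < Real.cosh (s * t) := Real.cosh_pos _
    have hshc : sinhc (s * t) ≠ 0 := (sinhc_pos _).ne'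
    -- flows in terms of A, C
    have hXd : HasDerivAt X
        ((Real.cosh (s * t) / (t / 2 * sinhc (s * t))) • (Z t - X t)) t := by
      convert hflow1 t ht using 2
      unfold cothc tanhc
      field_simp
    have hZd : HasDerivAt Z
        (((t / 2 * sinhc (s * t)) / Real.cosh (s * t)) •
          (μ • X t - μ • Z t - gradient f (X t))) t := by
      convert hflow2 t ht using 2
      unfold tanhc
      field_simp
    -- norm squared derivative
    have hNsq : HasDerivAt (fun u => ‖Z u - xstar‖ ^ 2)
        (2 * ⟪((t / 2 * sinhc (s * t)) / Real.cosh (s * t)) •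
          (μ • X t - μ • Z t - gradient f (X t)), Z t - xstar⟫) t := by
      have h := (hZd.sub_const xstar).inner ℝ (hZd.sub_const xstar)
      rw [real_inner_comm] at h
      simpa only [real_inner_self_eq_norm_sq, ← two_mul] using h
    -- f ∘ X derivative
    have hfd : HasDerivAt (fun u => f (X u))
        (Real.cosh (s * t) / (t / 2 * sinhc (s * t)) *
          ⟪gradient f (X t), Z t - X t⟫) t := by
      have h := ((hf (X t)).hasGradientAt.hasFDerivAt).comp_hasDerivAt t hXd
      simp [Function.comp] at h ⊢
      exact h
    have h := ((((hasDerivAt_C s t).pow 2).mul hNsq).const_mul (1/2:ℝ)).add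
      (((hasDerivAt_A s t).pow 2).mul (hfd.sub_const (f xstar)))
    refine h.congr_deriv ?_
    simp only [real_inner_smul_left, real_inner_smul_right, inner_sub_left, inner_sub_right,
      real_inner_smul_left, real_inner_smul_right, Nat.cast_ofNat, pow_one, Pi.pow_apply]
    rw [hμs]
    field_simp
    ring
  apply antitoneOn_of_deriv_nonpos (convex_Ici 0)
  · -- continuity
    apply ContinuousOn.add
    · exact (continuousOn_const.mul
        (((Real.continuous_cosh.comp (continuous_const.mul continuous_id)).continuousOn.pow 2).mul
          (((hZ.continuousOn.sub continuousOn_const).norm).pow 2)))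
    · have hAc : Continuous (fun u : ℝ => u / 2 * sinhc (s * u)) :=
        continuous_iff_continuousAt.2 fun u => (hasDerivAt_A s u).continuousAt
      exact ((hAc.pow 2).continuousOn).mul
        ((hf.continuous.comp_continuousOn hX.continuousOn).sub continuousOn_const)
  · rw [interior_Ici]
    intro t ht
    exact (key t ht).differentiableAt.differentiableWithinAt
  · rw [interior_Ici]
    intro t ht
    rw [(key t ht).deriv]
    -- show the derivative is nonpositive
    have ht0 : (0:ℝ) < t := ht
    have hA0 : (0:ℝ) < t / 2 * sinhc (s * t) := mul_pos (by linarith) (sinhc_pos _)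
    have hC0 : (0:ℝ) < Real.cosh (s * t) := Real.cosh_pos _
    set a := Z t - xstar with ha
    set b := X t - xstar with hb
    set g := gradient f (X t) with hg
    have hsc' := hsc (X t) xstar
    have hrw1 : ⟪g, Z t - X t⟫ - ⟪g, a⟫ = ⟪g, xstar - X t⟫ := by
      rw [← inner_sub_right]; congr 1; rw [ha]; abel
    have hrw2 : ‖xstar - X t‖ = ‖b‖ := by rw [hb, norm_sub_rev]
    have hkey : (f (X t) - f xstar) + (⟪g, Z t - X t⟫ - ⟪g, a⟫) ≤ -(μ/2) * ‖b‖ ^ 2 := by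
      rw [hrw1]
      have := hsc (X t) xstar
      rw [hrw2] at this
      linarith
    have hba : X t - Z t = b - a := by rw [ha, hb]; abel
    have hquad : μ/2 * ‖a‖ ^ 2 + μ * ⟪X t - Z t, a⟫ - μ/2 * ‖b‖ ^ 2 ≤ 0 := by
      rw [hba, inner_sub_left, real_inner_self_eq_norm_sq]
      have h2 : ⟪b, a⟫ - 1/2 * ‖a‖ ^ 2 - 1/2 * ‖b‖ ^ 2 ≤ 0 := by
        nlinarith [real_inner_le_norm b a, sq_nonneg (‖a‖ - ‖b‖)]
      nlinarith [mul_nonpos_of_nonneg_of_nonpos hμ h2]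
    have hbr : μ / 2 * ‖a‖ ^ 2 + (μ * ⟪X t - Z t, a⟫ - ⟪g, a⟫)
        + ((f (X t) - f xstar) + ⟪g, Z t - X t⟫) ≤ 0 := by linarith
    exact mul_nonpos_of_nonneg_of_nonpos (le_of_lt (mul_pos hC0 hA0)) hbr
end

section
/- Let E be a finite-dimensional real inner product space, μ ≥ 0, f : E → ℝ differentiable and μ-strongly convex, x* a minimizer of f, and x₀ ∈ E. Suppose X, Z : [0,∞) → E are continuously differentiable with X(0) = Z(0) = x₀ and satisfy, for all t > 0, Ẋ(t) = (2/t)·cothc((√μ/2)·t)·(Z(t) − X(t)) and Ż(t) = (t/2)·tanhc((√μ/2)·t)·(μ·X(t) − μ·Z(t) − ∇f(X(t))). Then for all t > 0, f(X(t)) − f(x*) ≤ (2/t²)·cschc²((√μ/2)·t)·‖x₀ − x*‖². -/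
open scoped RealInnerProductSpace

noncomputable def phi (s t : ℝ) : ℝ := t * sinhc (s * t)

lemma phi_eq {s : ℝ} (hs : s ≠ 0) (t : ℝ) : phi s t = Real.sinh (s * t) / s := by
  unfold phi sinhc
  rcases eq_or_ne t 0 with rfl | ht
  · simp
  · rw [if_neg (mul_ne_zero hs ht)]
    field_simp

lemma hasDerivAt_phi (s t : ℝ) : HasDerivAt (phi s) (Real.cosh (s * t)) t := by
  rcases eq_or_ne s 0 with rfl | hs
  · have : phi 0 = fun t => t := by
      funext u; unfold phi sinhc; simp
    rw [this]
    simpa using hasDerivAt_id' t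
  · have h0 : phi s = fun u => Real.sinh (s * u) / s := funext (phi_eq hs)
    rw [h0]
    have h1 : HasDerivAt (fun u : ℝ => s * u) s t := by
      simpa using (hasDerivAt_id t).const_mul s
    have h2 := (Real.hasDerivAt_sinh (s * t)).comp t h1
    have := h2.div_const s
    simpa [mul_comm, mul_div_assoc, mul_div_cancel_left₀ _ hs] using this

lemma phi_pos {s t : ℝ} (ht : 0 < t) : 0 < phi s t := mul_pos ht (sinhc_pos _)

lemma sinh_eq_s_mul_phi (s t : ℝ) : Real.sinh (s * t) = s * phi s t := by
  rcases eq_or_ne s 0 with rfl | hs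
  · simp
  · rw [phi_eq hs]; field_simp

/-- Convergence rate of the unified NAG system: for all `t > 0`,
`f(X(t)) − f(x*) ≤ (2/t²)·cschc²((√μ/2)t)·‖x₀ − x*‖²`. -/
theorem unified_nag_system_convergence
    {E : Type*} [NormedAddCommGroup E] [InnerProductSpace ℝ E] [FiniteDimensional ℝ E]
    (μ : ℝ) (hμ : 0 ≤ μ)
    (f : E → ℝ) (hf : Differentiable ℝ f)
    (hsc : ∀ x y : E, f x + ⟪gradient f x, y - x⟫ + μ / 2 * ‖y - x‖ ^ 2 ≤ f y)
    (xstar : E) (hmin : ∀ x, f xstar ≤ f x)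
    (x₀ : E) (X Z : ℝ → E)
    (hX : ContDiffOn ℝ 1 X (Set.Ici 0)) (hZ : ContDiffOn ℝ 1 Z (Set.Ici 0))
    (hX0 : X 0 = x₀) (hZ0 : Z 0 = x₀)
    (hflow1 : ∀ t > (0 : ℝ),
      HasDerivAt X ((2 / t * cothc (Real.sqrt μ / 2 * t)) • (Z t - X t)) t)
    (hflow2 : ∀ t > (0 : ℝ),
      HasDerivAt Z ((t / 2 * tanhc (Real.sqrt μ / 2 * t)) •
        (μ • X t - μ • Z t - gradient f (X t))) t) :
    ∀ t > (0 : ℝ), f (X t) - f xstar ≤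
      2 / t ^ 2 * cschc (Real.sqrt μ / 2 * t) ^ 2 * ‖x₀ - xstar‖ ^ 2 := by
  set s : ℝ := Real.sqrt μ / 2 with hs_def
  have hs2 : s ^ 2 = μ / 4 := by
    rw [hs_def, div_pow, Real.sq_sqrt hμ]; norm_num
  set A : ℝ → ℝ := fun u => phi s u ^ 2 / 2 with hA_def
  set V : ℝ → ℝ := fun u =>
    A u * (f (X u) - f xstar) + (2 + μ * A u) / 2 * ‖Z u - xstar‖ ^ 2 with hV_def
  -- derivative of V is nonpositive on (0, ∞)
  have key : ∀ u : ℝ, 0 < u → ∃ D, HasDerivAt V D u ∧ D ≤ 0 := by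
    intro u hu
    have hu0 : u ≠ 0 := hu.ne'
    have hp : 0 < phi s u := phi_pos hu
    have hc : 0 < Real.cosh (s * u) := Real.cosh_pos _
    have hsinhc : sinhc (s * u) ≠ 0 := (sinhc_pos _).ne'
    have hcsq : Real.cosh (s * u) ^ 2 = 1 + μ * phi s u ^ 2 / 4 := by
      have h1 : Real.sinh (s * u) = s * phi s u := sinh_eq_s_mul_phi s u
      rw [Real.cosh_sq, h1, mul_pow, hs2]; ring
    -- derivative of A
    have hApd : HasDerivAt A (phi s u * Real.cosh (s * u)) u := by
      have h := hasDerivAt_phi s u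
      have h2 := (h.mul h).div_const 2
      have hAeq : A = fun v => phi s v * phi s v / 2 := by
        funext v; simp [hA_def]; ring
      rw [hAeq]
      refine h2.congr_deriv ?_
      ring
    -- derivative of f ∘ X
    have hXd := hflow1 u hu
    have hZd := hflow2 u hu
    have hgrad : HasFDerivAt f
        ((InnerProductSpace.toDual ℝ E) (gradient f (X u))) (X u) :=
      (hf (X u)).hasGradientAt.hasFDerivAt
    have hfX : HasDerivAt (fun v => f (X v) - f xstar)
        (2 / u * cothc (s * u) * ⟪gradient f (X u), Z u - X u⟫) u := by
      have h := (hgrad.comp_hasDerivAt u hXd).sub_const (f xstar)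
      simpa [Function.comp, InnerProductSpace.toDual_apply_apply] using h
    -- derivative of the norm-square term
    have hbd : HasDerivAt (fun v => Z v - xstar)
        ((u / 2 * tanhc (s * u)) • (μ • X u - μ • Z u - gradient f (X u))) u :=
      hZd.sub_const xstar
    have hNd : HasDerivAt (fun v => ‖Z v - xstar‖ ^ 2)
        (2 * ⟪Z u - xstar,
          (u / 2 * tanhc (s * u)) • (μ • X u - μ • Z u - gradient f (X u))⟫) u := by
      have h := hbd.inner ℝ hbd
      have heq : (fun v => ⟪Z v - xstar, Z v - xstar⟫)
          = fun v => ‖Z v - xstar‖ ^ 2 := by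
        funext v; rw [real_inner_self_eq_norm_sq]
      rw [heq] at h
      refine h.congr_deriv ?_
      rw [real_inner_comm]; ring
    have hVd : HasDerivAt V
        ((phi s u * Real.cosh (s * u)) * (f (X u) - f xstar)
          + A u * (2 / u * cothc (s * u) * ⟪gradient f (X u), Z u - X u⟫)
          + (μ * (phi s u * Real.cosh (s * u)) / 2 * ‖Z u - xstar‖ ^ 2
            + (2 + μ * A u) / 2
              * (2 * ⟪Z u - xstar,
                  (u / 2 * tanhc (s * u)) • (μ • X u - μ • Z u - gradient f (X u))⟫))) u :=
      (hApd.mul hfX).add ((((hApd.const_mul μ).const_add 2).div_const 2).mul hNd)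
    refine ⟨_, hVd, ?_⟩
    -- now show the derivative is ≤ 0
    have hcoef1 : 2 / u * cothc (s * u) = 2 * Real.cosh (s * u) / phi s u := by
      unfold cothc tanhc phi
      field_simp
    have hcoef2 : u / 2 * tanhc (s * u) = phi s u / (2 * Real.cosh (s * u)) := by
      unfold tanhc phi
      field_simp
    have hZX : Z u - X u = (Z u - xstar) - (X u - xstar) := by abel
    have e1 : 2 / u * cothc (s * u) * ⟪gradient f (X u), Z u - X u⟫
        = 2 * Real.cosh (s * u) / phi s u
          * (⟪gradient f (X u), Z u - xstar⟫ - ⟪gradient f (X u), X u - xstar⟫) := by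
      rw [hZX, hcoef1, inner_sub_right]
    have hXZ : μ • X u - μ • Z u - gradient f (X u)
        = μ • ((X u - xstar) - (Z u - xstar)) - gradient f (X u) := by
      rw [smul_sub, smul_sub, smul_sub]; abel
    have e2 : ⟪Z u - xstar,
          (u / 2 * tanhc (s * u)) • (μ • X u - μ • Z u - gradient f (X u))⟫
        = phi s u / (2 * Real.cosh (s * u))
          * (μ * ⟪Z u - xstar, X u - xstar⟫ - μ * ‖Z u - xstar‖ ^ 2
              - ⟪gradient f (X u), Z u - xstar⟫) := by
      rw [hcoef2, real_inner_smul_right, hXZ, inner_sub_right, inner_smul_right,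
        inner_sub_right, real_inner_self_eq_norm_sq,
        real_inner_comm (Z u - xstar) (gradient f (X u))]
      ring
    rw [e1, e2]
    -- strong convexity at (X u, x*)
    have hsc' : f (X u) - f xstar
        ≤ ⟪gradient f (X u), X u - xstar⟫ - μ / 2 * ‖X u - xstar‖ ^ 2 := by
      have h := hsc (X u) xstar
      have h1 : xstar - X u = -(X u - xstar) := by abel
      rw [h1, inner_neg_right, norm_neg] at h
      linarith
    have hBa : ⟪Z u - xstar, X u - xstar⟫ ≤ ‖X u - xstar‖ * ‖Z u - xstar‖ := by
      have := real_inner_le_norm (Z u - xstar) (X u - xstar)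
      linarith [this]
    have hbr : f (X u) - f xstar + μ * ⟪Z u - xstar, X u - xstar⟫
        - ⟪gradient f (X u), X u - xstar⟫ - μ / 2 * ‖Z u - xstar‖ ^ 2 ≤ 0 := by
      nlinarith [hsc', mul_le_mul_of_nonneg_left hBa hμ,
        mul_nonneg hμ (sq_nonneg (‖X u - xstar‖ - ‖Z u - xstar‖))]
    have hAu : A u = phi s u ^ 2 / 2 := rfl
    have h2c : (2 + μ * A u) / 2 = Real.cosh (s * u) ^ 2 := by
      rw [hAu, hcsq]; ring
    have heq : (phi s u * Real.cosh (s * u)) * (f (X u) - f xstar)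
          + A u * (2 * Real.cosh (s * u) / phi s u
            * (⟪gradient f (X u), Z u - xstar⟫ - ⟪gradient f (X u), X u - xstar⟫))
          + (μ * (phi s u * Real.cosh (s * u)) / 2 * ‖Z u - xstar‖ ^ 2
            + (2 + μ * A u) / 2
              * (2 * (phi s u / (2 * Real.cosh (s * u))
                * (μ * ⟪Z u - xstar, X u - xstar⟫ - μ * ‖Z u - xstar‖ ^ 2
                    - ⟪gradient f (X u), Z u - xstar⟫))))
        = (phi s u * Real.cosh (s * u))
          * (f (X u) - f xstar + μ * ⟪Z u - xstar, X u - xstar⟫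
              - ⟪gradient f (X u), X u - xstar⟫ - μ / 2 * ‖Z u - xstar‖ ^ 2) := by
      rw [h2c, hAu]
      field_simp
      ring
    rw [heq]
    exact mul_nonpos_of_nonneg_of_nonpos (mul_pos hp hc).le hbr
  -- V is antitone on [0, ∞)
  have hVcont : ContinuousOn V (Set.Ici (0 : ℝ)) := by
    have hphic : Continuous (phi s) := by
      have : Differentiable ℝ (phi s) := fun t => (hasDerivAt_phi s t).differentiableAt
      exact this.continuous
    have hAc : Continuous A := by
      rw [hA_def]; fun_prop
    have hXc : ContinuousOn X (Set.Ici 0) := hX.continuousOn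
    have hZc : ContinuousOn Z (Set.Ici 0) := hZ.continuousOn
    apply ContinuousOn.add
    · exact (hAc.continuousOn).mul ((hf.continuous.comp_continuousOn hXc).sub continuousOn_const)
    · exact (((continuousOn_const.add
        (continuousOn_const.mul hAc.continuousOn)).div_const 2)).mul
        (((hZc.sub continuousOn_const).norm).pow 2)
  have hVdiff : DifferentiableOn ℝ V (interior (Set.Ici (0 : ℝ))) := by
    rw [interior_Ici]
    intro u hu
    obtain ⟨D, hD, -⟩ := key u hu
    exact hD.differentiableAt.differentiableWithinAt
  have hVd0 : ∀ u ∈ interior (Set.Ici (0 : ℝ)), deriv V u ≤ 0 := by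
    rw [interior_Ici]
    intro u hu
    obtain ⟨D, hD, hD0⟩ := key u hu
    rw [hD.deriv]
    exact hD0
  have hanti : AntitoneOn V (Set.Ici (0 : ℝ)) :=
    antitoneOn_of_deriv_nonpos (convex_Ici 0) hVcont hVdiff hVd0
  have hV0 : V 0 = ‖x₀ - xstar‖ ^ 2 := by
    have hphi0 : phi s 0 = 0 := by unfold phi; simp
    simp [hV_def, hA_def, hphi0, hZ0]
  intro t ht
  have hVt : V t ≤ ‖x₀ - xstar‖ ^ 2 := by
    rw [← hV0]
    exact hanti Set.self_mem_Ici (Set.mem_Ici.2 ht.le) ht.le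
  have hApos : 0 < A t := by
    have := phi_pos (s := s) ht
    simp only [hA_def]
    positivity
  have hlow : A t * (f (X t) - f xstar) ≤ V t := by
    have h1 : 0 ≤ (2 + μ * A t) / 2 * ‖Z t - xstar‖ ^ 2 := by
      apply mul_nonneg
      · have : 0 ≤ μ * A t := mul_nonneg hμ hApos.le
        linarith
      · positivity
    simp only [hV_def]
    linarith
  have hmain : A t * (f (X t) - f xstar) ≤ ‖x₀ - xstar‖ ^ 2 := le_trans hlow hVt
  have hrhs : 2 / t ^ 2 * cschc (s * t) ^ 2 * ‖x₀ - xstar‖ ^ 2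
      = ‖x₀ - xstar‖ ^ 2 / A t := by
    have hAt : A t = phi s t ^ 2 / 2 := rfl
    rw [hAt]
    unfold phi cschc
    have hsinhc : sinhc (s * t) ≠ 0 := (sinhc_pos _).ne'
    field_simp
  rw [hrhs, le_div_iff₀ hApos]
  linarith [hmain, mul_comm (A t) (f (X t) - f xstar)]
end

section
/- Let E be a finite-dimensional real inner product space, s > 0, μ ≥ 0 with μ·s < 1, f : E → ℝ differentiable, μ-strongly convex, with (1/s)-Lipschitz gradient, and x* a minimizer of f. Let (t_k)_{k≥0} be a strictly increasing sequence of positive reals satisfying (2√s/t_k)·cothc((√μ/2)·t_k) ≤ 1 for all k ≥ 2, and (1 − (2√s/t_{k+1})·cothc((√μ/2)·t_{k+1}))·(t_{k+1}²/4)·sinhc²((√μ/2)·t_{k+1}) ≤ (t_k²/4)·sinhc²((√μ/2)·t_k) for all k ≥ 0. Define x₀ = z₀ ∈ E and, for k ≥ 0, τ_k = ((2√s/t_{k+1})·cothc((√μ/2)·t_{k+1}) − μ·s)/(1 − μ·s), δ_k = (√s·t_{k+1}/2)·tanhc((√μ/2)·t_{k+1}), y_k = x_k + τ_k·(z_k −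 x_k), x_{k+1} = y_k − s·∇f(y_k), z_{k+1} = z_k + δ_k·(μ·y_k − μ·z_k − ∇f(y_k)). Then for all k ≥ 0, f(x_k) − f(x*) ≤ (4/t_k²)·cschc²((√μ/2)·t_k)·((1/2)·cosh²((√μ/2)·t₀)·‖x₀ − x*‖² + (t₀²/4)·sinhc²((√μ/2)·t₀)·(f(x₀) − f(x*))). -/
open scoped RealInnerProductSpace

lemma tanhc_pos (x : ℝ) : 0 < tanhc x := div_pos (sinhc_pos x) (Real.cosh_pos x)
lemma sinh_eq_mul_sinhc (x : ℝ) : Real.sinh x = x * sinhc x := by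
  unfold sinhc
  rcases eq_or_ne x 0 with h | h
  · simp [h]
  · rw [if_neg h]; field_simp
lemma one_add_sq_sinhc (x : ℝ) : 1 + x ^ 2 * sinhc x ^ 2 = Real.cosh x ^ 2 := by
  have h : x ^ 2 * sinhc x ^ 2 = Real.sinh x ^ 2 := by
    rw [sinh_eq_mul_sinhc]; ring
  rw [h, Real.cosh_sq]; ring
lemma cothc_eq (x : ℝ) : cothc x = Real.cosh x / sinhc x := by
  unfold cothc tanhc; rw [one_div_div]

lemma ident_s (μ s T : ℝ) (hs : 0 < s) (hT : 0 < T) :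
    s = (2 * Real.sqrt s / T * cothc (Real.sqrt μ / 2 * T))
      * (Real.sqrt s * T / 2 * tanhc (Real.sqrt μ / 2 * T)) := by
  rw [cothc_eq]; unfold tanhc
  set S := sinhc (Real.sqrt μ / 2 * T) with hSdef
  set C := Real.cosh (Real.sqrt μ / 2 * T) with hCdef
  have h1 : S ≠ 0 := (sinhc_pos _).ne'
  have h2 : C ≠ 0 := (Real.cosh_pos _).ne'
  conv_lhs => rw [← Real.mul_self_sqrt hs.le]
  field_simp

lemma ident_B (μ T : ℝ) (hμ : 0 ≤ μ) :
    1 + μ * (T ^ 2 / 4 * sinhc (Real.sqrt μ / 2 * T) ^ 2)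
      = Real.cosh (Real.sqrt μ / 2 * T) ^ 2 := by
  have h := one_add_sq_sinhc (Real.sqrt μ / 2 * T)
  have hx : (Real.sqrt μ / 2 * T) ^ 2 = μ / 4 * T ^ 2 := by
    rw [mul_pow, div_pow, Real.sq_sqrt hμ]; norm_num
  rw [← h, hx]; ring

lemma ident_BA (μ s T : ℝ) (hμ : 0 ≤ μ) (hs : 0 < s) (hT : 0 < T) :
    (2 * Real.sqrt s / T * cothc (Real.sqrt μ / 2 * T))
        * (T ^ 2 / 4 * sinhc (Real.sqrt μ / 2 * T) ^ 2)
      = (Real.sqrt s * T / 2 * tanhc (Real.sqrt μ / 2 * T))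
        * (1 + μ * (T ^ 2 / 4 * sinhc (Real.sqrt μ / 2 * T) ^ 2)) := by
  rw [ident_B μ T hμ, cothc_eq]; unfold tanhc
  set S := sinhc (Real.sqrt μ / 2 * T) with hSdef
  set C := Real.cosh (Real.sqrt μ / 2 * T) with hCdef
  have h1 : S ≠ 0 := (sinhc_pos _).ne'
  have h2 : C ≠ 0 := (Real.cosh_pos _).ne'
  field_simp
  ring

lemma theta_pos (μ s T : ℝ) (hs : 0 < s) (hT : 0 < T) :
    0 < 2 * Real.sqrt s / T * cothc (Real.sqrt μ / 2 * T) := by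
  have := tanhc_pos (Real.sqrt μ / 2 * T)
  have hsq := Real.sqrt_pos.mpr hs
  unfold cothc
  positivity

lemma delta_pos (μ s T : ℝ) (hs : 0 < s) (hT : 0 < T) :
    0 < Real.sqrt s * T / 2 * tanhc (Real.sqrt μ / 2 * T) := by
  have := tanhc_pos (Real.sqrt μ / 2 * T)
  have hsq := Real.sqrt_pos.mpr hs
  positivity

lemma Apos (μ T : ℝ) (hT : 0 < T) : 0 < T ^ 2 / 4 * sinhc (Real.sqrt μ / 2 * T) ^ 2 := by
  have := sinhc_pos (Real.sqrt μ / 2 * T)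
  positivity


lemma smooth_descent {E : Type*} [NormedAddCommGroup E] [InnerProductSpace ℝ E] [CompleteSpace E]
    (s : ℝ) (hs : 0 < s) (f : E → ℝ) (hf : Differentiable ℝ f)
    (hlip : ∀ x y : E, ‖gradient f x - gradient f y‖ ≤ (1 / s) * ‖x - y‖) (p : E) :
    f (p - s • gradient f p) ≤ f p - s / 2 * ‖gradient f p‖ ^ 2 := by
  set g := gradient f p with hg
  set v : E := -(s • g) with hv
  have hder : ∀ r : ℝ, HasDerivAt (fun r : ℝ => f (p + r • v))
      (⟪gradient f (p + r • v), v⟫) r := by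
    intro r
    have h1 : HasDerivAt (fun r : ℝ => p + r • v) v r := by
      simpa using ((hasDerivAt_id r).smul_const v).const_add p
    have h2 := ((hf (p + r • v)).hasGradientAt).hasFDerivAt
    have h3 := h2.comp_hasDerivAt r h1
    simpa [InnerProductSpace.toDual_apply_apply, Function.comp_def] using h3
  have hgc : Continuous (gradient f) := by
    have : LipschitzWith (Real.toNNReal (1 / s)) (gradient f) := by
      apply LipschitzWith.of_dist_le_mul
      intro a b
      rw [dist_eq_norm, dist_eq_norm, Real.coe_toNNReal _ (by positivity)]
      exact hlip a b
    exact this.continuous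
  have hcont : Continuous fun r : ℝ => ⟪gradient f (p + r • v), v⟫ := by
    apply Continuous.inner _ continuous_const
    exact hgc.comp (continuous_const.add (continuous_id.smul continuous_const))
  have hbound : ∀ r ∈ Set.Icc (0:ℝ) 1,
      ⟪gradient f (p + r • v), v⟫ ≤ s * ‖g‖ ^ 2 * (r - 1) := by
    intro r hr
    have hsplit : ⟪gradient f (p + r • v), v⟫
        = ⟪g, v⟫ + ⟪gradient f (p + r • v) - g, v⟫ := by
      rw [inner_sub_left]; ring
    have h1 : ⟪g, v⟫ = -(s * ‖g‖ ^ 2) := by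
      rw [hv, inner_neg_right, real_inner_smul_right, real_inner_self_eq_norm_sq]
    have h2 : ⟪gradient f (p + r • v) - g, v⟫ ≤ ‖gradient f (p + r • v) - g‖ * ‖v‖ :=
      real_inner_le_norm _ _
    have h3 : ‖gradient f (p + r • v) - g‖ ≤ (1 / s) * (r * (s * ‖g‖)) := by
      have := hlip (p + r • v) p
      rw [← hg] at this
      calc ‖gradient f (p + r • v) - g‖ ≤ (1/s) * ‖p + r • v - p‖ := this
        _ = (1/s) * (r * (s * ‖g‖)) := by
            rw [add_sub_cancel_left, norm_smul, hv, norm_neg, norm_smul,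
              Real.norm_eq_abs, Real.norm_eq_abs, abs_of_nonneg hr.1, abs_of_nonneg hs.le]
    have hvnorm : ‖v‖ = s * ‖g‖ := by
      rw [hv, norm_neg, norm_smul, Real.norm_eq_abs, abs_of_nonneg hs.le]
    have h4 : ‖gradient f (p + r • v) - g‖ * ‖v‖ ≤ ((1/s) * (r * (s * ‖g‖))) * (s * ‖g‖) := by
      calc ‖gradient f (p + r • v) - g‖ * ‖v‖
          ≤ (1/s * (r * (s * ‖g‖))) * ‖v‖ := mul_le_mul_of_nonneg_right h3 (norm_nonneg v)
        _ = ((1/s) * (r * (s * ‖g‖))) * (s * ‖g‖) := by rw [hvnorm]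
    have h5 : ((1/s) * (r * (s * ‖g‖))) * (s * ‖g‖) = s * ‖g‖^2 * r := by
      field_simp
    rw [hsplit, h1]
    nlinarith [h2, h4]
  have hFTC : ∫ r in (0:ℝ)..1, ⟪gradient f (p + r • v), v⟫
      = f (p + (1:ℝ) • v) - f (p + (0:ℝ) • v) := by
    exact intervalIntegral.integral_eq_sub_of_hasDerivAt
      (fun r _ => hder r) (hcont.intervalIntegrable 0 1)
  have hmono : ∫ r in (0:ℝ)..1, ⟪gradient f (p + r • v), v⟫
      ≤ ∫ r in (0:ℝ)..1, s * ‖g‖ ^ 2 * (r - 1) := by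
    apply intervalIntegral.integral_mono_on zero_le_one
      (hcont.intervalIntegrable 0 1) ((continuous_const.mul (continuous_id.sub continuous_const) : Continuous fun r : ℝ =>
        s * ‖g‖ ^ 2 * (r - 1)).intervalIntegrable 0 1) hbound
  have hval : ∫ r in (0:ℝ)..1, s * ‖g‖ ^ 2 * (r - 1) = -(s / 2 * ‖g‖ ^ 2) := by
    rw [intervalIntegral.integral_const_mul]
    have : ∫ r in (0:ℝ)..1, (r - 1) = -(1/2 : ℝ) := by
      have hd : ∀ r ∈ Set.uIcc (0:ℝ) 1, HasDerivAt (fun r : ℝ => r ^ 2 / 2 - r) (r - 1) r := by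
        intro r _
        refine HasDerivAt.congr_deriv (((hasDerivAt_pow 2 r).div_const 2).sub (hasDerivAt_id' r)) ?_
        norm_num
      rw [intervalIntegral.integral_eq_sub_of_hasDerivAt hd
        (((continuous_id.sub continuous_const) :
          Continuous fun r : ℝ => r - 1).intervalIntegrable 0 1)]
      norm_num
    rw [this]; ring
  have h01 : p + (1:ℝ) • v = p - s • g := by rw [hv]; module
  have h00 : p + (0:ℝ) • v = p := by simp
  rw [h01, h00] at hFTC
  rw [hval] at hmono
  linarith [hFTC ▸ hmono]


lemma nag_core (μ θ δ τ A A' F F' Fy aa bb cc U W X Z : ℝ)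
    (hμ : 0 ≤ μ) (hθ : 0 < θ) (hδ : 0 < δ) (hA' : 0 < A')
    (hμs : μ * (θ * δ) < 1)
    (hBrel : θ * A' = δ * (1 + μ * A'))
    (hτ : τ * (1 - μ * (θ * δ)) = θ - μ * (θ * δ))
    (hAt : (1 - θ) * A' ≤ A)
    (hF : 0 ≤ F) (hU : 0 ≤ U) (hc : 0 ≤ cc) (hUWX : 0 ≤ U - 2 * W + X)
    (hdesc : F' ≤ Fy - (θ * δ) / 2 * cc)
    (hstar : Fy ≤ (τ * aa + (1 - τ) * bb)
      - μ / 2 * (τ ^ 2 * U + (1 - τ) ^ 2 * X + 2 * τ * (1 - τ) * W))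
    (hscx : (1 - θ) * A' * (Fy - F)
      ≤ (1 - θ) * A' * (τ * (aa - bb) - μ / 2 * (τ ^ 2 * (U - 2 * W + X))))
    (hprod : 0 ≤ μ * τ * ((1 - θ) * A') * (U - 2 * W + X))
    (hZ : Z = (1 - δ * μ * (1 - τ)) ^ 2 * U + (δ * μ * (1 - τ)) ^ 2 * X + (-δ) ^ 2 * cc
      + 2 * (1 - δ * μ * (1 - τ)) * (δ * μ * (1 - τ)) * W
      + 2 * (1 - δ * μ * (1 - τ)) * (-δ) * aa + 2 * (δ * μ * (1 - τ)) * (-δ) * bb) :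
    A' * F' + (1 + μ * A') / 2 * Z ≤ A * F + (1 + μ * A) / 2 * U := by
  subst hZ
  have h1 : A' * F' ≤ A' * (Fy - (θ * δ) / 2 * cc) :=
    mul_le_mul_of_nonneg_left hdesc hA'.le
  have h3 : (θ * A') * Fy ≤ (θ * A') * ((τ * aa + (1 - τ) * bb)
      - μ / 2 * (τ ^ 2 * U + (1 - τ) ^ 2 * X + 2 * τ * (1 - τ) * W)) :=
    mul_le_mul_of_nonneg_left hstar (by positivity)
  have h5 : (1 - θ) * A' * F ≤ A * F := mul_le_mul_of_nonneg_right hAt hF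
  have h6 : μ * ((1 - θ) * A' * U) ≤ μ * (A * U) :=
    mul_le_mul_of_nonneg_left (mul_le_mul_of_nonneg_right hAt hU) hμ
  have hLpos : 0 < θ - μ * δ := by nlinarith [hBrel, hA', hδ]
  have hDpos : 0 < 1 - μ * (θ * δ) := by linarith
  have hQmul : ((θ - μ * δ) * (1 - μ * (θ * δ)) ^ 2) * ((θ * A') * ((τ * aa + (1 - τ) * bb)
        - μ / 2 * (τ ^ 2 * U + (1 - τ) ^ 2 * X + 2 * τ * (1 - τ) * W))
      + (1 - θ) * A' * (τ * (aa - bb) - μ / 2 * (τ ^ 2 * (U - 2 * W + X)))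
      - (θ * δ) / 2 * cc * A'
      + (1 + μ * A') / 2 * ((1 - δ * μ * (1 - τ)) ^ 2 * U + (δ * μ * (1 - τ)) ^ 2 * X
        + (-δ) ^ 2 * cc + 2 * (1 - δ * μ * (1 - τ)) * (δ * μ * (1 - τ)) * W
        + 2 * (1 - δ * μ * (1 - τ)) * (-δ) * aa + 2 * (δ * μ * (1 - τ)) * (-δ) * bb))
      = ((θ - μ * δ) * (1 - μ * (θ * δ)) ^ 2) * ((1 + μ * ((1 - θ) * A')) / 2 * U
        - μ * τ * ((1 - θ) * A') / 2 * (U - 2 * W + X)) := by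
    linear_combination ((-1:ℝ)*θ*A'*bb + θ*A'*aa + μ*δ*A'*bb + (-1:ℝ)*μ*δ*A'*aa + (1/2:ℝ)*μ*θ*A'*X + (-1:ℝ)*μ*θ*A'*W + (1/2:ℝ)*μ*θ*A'*U + (-1/2:ℝ)*μ*θ*τ*A'*X + μ*θ*τ*A'*W + (-1/2:ℝ)*μ*θ*τ*A'*U + (-1:ℝ)*μ*θ*δ*W + μ*θ*δ*U + μ*θ*δ^2*bb + (-1:ℝ)*μ*θ*δ^2*aa + μ*θ^2*A'*W + (-1:ℝ)*μ*θ^2*A'*U + μ*θ^2*δ*A'*bb + (-1:ℝ)*μ*θ^2*δ*A'*aa + (-1/2:ℝ)*μ^2*δ*A'*X + μ^2*δ*A'*W + (-1/2:ℝ)*μ^2*δ*A'*U + (1/2:ℝ)*μ^2*δ*τ*A'*X + (-1:ℝ)*μ^2*δ*τ*A'*W + (1/2:ℝ)*μ^2*δ*τ*A'*U + μ^2*δ^2*W + (-1:ℝ)*μ^2*δ^2*U + (-1:ℝ)*μ^2*δ^3*bb + μ^2*δ^3*aa + (-2:ℝ)*μ^2*θ*δ*A'*W + (2:ℝ)*μ^2*θ*δ*A'*U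 + (-1:ℝ)*μ^2*θ*δ^2*X + (2:ℝ)*μ^2*θ*δ^2*W + (-1:ℝ)*μ^2*θ*δ^2*U + (1/2:ℝ)*μ^2*θ*δ^2*τ*X + (-1:ℝ)*μ^2*θ*δ^2*τ*W + (1/2:ℝ)*μ^2*θ*δ^2*τ*U + (1/2:ℝ)*μ^2*θ^2*δ*τ*A'*X + (-1:ℝ)*μ^2*θ^2*δ*τ*A'*W + (1/2:ℝ)*μ^2*θ^2*δ*τ*A'*U + (1/2:ℝ)*μ^2*θ^2*δ^2*X + (-1/2:ℝ)*μ^2*θ^2*δ^2*U + (-1:ℝ)*μ^2*θ^2*δ^3*bb + μ^2*θ^2*δ^3*aa + (-1/2:ℝ)*μ^2*θ^3*δ*A'*X + (1/2:ℝ)*μ^2*θ^3*δ*A'*U + μ^3*δ^2*A'*W + (-1:ℝ)*μ^3*δ^2*A'*U + μ^3*δ^3*X + (-2:ℝ)*μ^3*δ^3*W + μ^3*δ^3*U + (-1:ℝ)*μ^3*δ^3*A'*bb + μ^3*δ^3*A'*aa + (-1/2:ℝ)*μ^3*δ^3*τ*X + μ^3*δ^3*τ*W + (-1/2:ℝ)*μ^3*δ^3*τ*U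 + (-1:ℝ)*μ^3*θ*δ^2*A'*X + (2:ℝ)*μ^3*θ*δ^2*A'*W + (-1:ℝ)*μ^3*θ*δ^2*A'*U + (-1/2:ℝ)*μ^3*θ*δ^3*X + (1/2:ℝ)*μ^3*θ*δ^3*U + μ^3*θ*δ^4*bb + (-1:ℝ)*μ^3*θ*δ^4*aa + μ^3*θ^2*δ^2*A'*X + (-1:ℝ)*μ^3*θ^2*δ^2*A'*U + (1/2:ℝ)*μ^3*θ^2*δ^3*X + (-1:ℝ)*μ^3*θ^2*δ^3*W + (1/2:ℝ)*μ^3*θ^2*δ^3*U + (-1:ℝ)*μ^3*θ^2*δ^3*A'*bb + μ^3*θ^2*δ^3*A'*aa + (-1/2:ℝ)*μ^3*θ^2*δ^3*τ*X + μ^3*θ^2*δ^3*τ*W + (-1/2:ℝ)*μ^3*θ^2*δ^3*τ*U + μ^4*δ^3*A'*X + (-2:ℝ)*μ^4*δ^3*A'*W + μ^4*δ^3*A'*U + (-1/2:ℝ)*μ^4*δ^3*τ*A'*X + μ^4*δ^3*τ*A'*W + (-1/2:ℝ)*μ^4*δ^3*τ*A'*U + (-1/2:ℝ)*μ^4*θ*δ^3*A'*X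 + (1/2:ℝ)*μ^4*θ*δ^3*A'*U + (-1/2:ℝ)*μ^4*θ*δ^4*X + μ^4*θ*δ^4*W + (-1/2:ℝ)*μ^4*θ*δ^4*U + μ^4*θ*δ^4*A'*bb + (-1:ℝ)*μ^4*θ*δ^4*A'*aa + (1/2:ℝ)*μ^4*θ*δ^4*τ*X + (-1:ℝ)*μ^4*θ*δ^4*τ*W + (1/2:ℝ)*μ^4*θ*δ^4*τ*U + (1/2:ℝ)*μ^4*θ^2*δ^3*A'*X + (-1:ℝ)*μ^4*θ^2*δ^3*A'*W + (1/2:ℝ)*μ^4*θ^2*δ^3*A'*U + (-1/2:ℝ)*μ^4*θ^2*δ^3*τ*A'*X + μ^4*θ^2*δ^3*τ*A'*W + (-1/2:ℝ)*μ^4*θ^2*δ^3*τ*A'*U + (-1/2:ℝ)*μ^5*θ*δ^4*A'*X + μ^5*θ*δ^4*A'*W + (-1/2:ℝ)*μ^5*θ*δ^4*A'*U + (1/2:ℝ)*μ^5*θ*δ^4*τ*A'*X + (-1:ℝ)*μ^5*θ*δ^4*τ*A'*W + (1/2:ℝ)*μ^5*θ*δ^4*τ*A'*U) * hτ + (θ*aa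 + (-1/2:ℝ)*θ*δ*cc + (-1:ℝ)*μ*δ*aa + (1/2:ℝ)*μ*δ^2*cc + (-1:ℝ)*μ*θ*W + μ*θ*U + μ*θ*δ*bb + (-1:ℝ)*μ*θ*δ*aa + μ*θ^2*W + (-1:ℝ)*μ*θ^2*U + (-1:ℝ)*μ*θ^2*δ*bb + (-1:ℝ)*μ*θ^2*δ*aa + μ*θ^2*δ^2*cc + μ^2*δ*W + (-1:ℝ)*μ^2*δ*U + (-1:ℝ)*μ^2*δ^2*bb + μ^2*δ^2*aa + (-1/2:ℝ)*μ^2*θ*δ*X + (1/2:ℝ)*μ^2*θ*δ*U + μ^2*θ*δ^2*bb + μ^2*θ*δ^2*aa + (-1:ℝ)*μ^2*θ*δ^3*cc + μ^2*θ^2*δ*X + (-1:ℝ)*μ^2*θ^2*δ*W + (-1:ℝ)*μ^2*θ^2*δ^2*bb + μ^2*θ^2*δ^2*aa + (-1/2:ℝ)*μ^2*θ^3*δ*X + (1/2:ℝ)*μ^2*θ^3*δ*U + μ^2*θ^3*δ^2*bb + (-1/2:ℝ)*μ^2*θ^3*δ^3*cc + (1/2:ℝ)*μ^3*δ^2*X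 + (-1:ℝ)*μ^3*δ^2*W + (1/2:ℝ)*μ^3*δ^2*U + (-1:ℝ)*μ^3*θ*δ^2*X + μ^3*θ*δ^2*W + μ^3*θ*δ^3*bb + (-1:ℝ)*μ^3*θ*δ^3*aa + (1/2:ℝ)*μ^3*θ^2*δ^2*X + (-1/2:ℝ)*μ^3*θ^2*δ^2*U + (-1:ℝ)*μ^3*θ^2*δ^3*bb + (1/2:ℝ)*μ^3*θ^2*δ^4*cc) * hBrel
  have hQ := mul_left_cancel₀ (by positivity : ((θ - μ * δ) * (1 - μ * (θ * δ)) ^ 2) ≠ 0) hQmul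
  linarith [h1, h3, hscx, h5, h6, hQ, hprod]


lemma norm_triple {E : Type*} [NormedAddCommGroup E] [InnerProductSpace ℝ E]
    (α β γ : ℝ) (u v g : E) :
    ‖α • u + β • v + γ • g‖ ^ 2
      = α ^ 2 * ‖u‖ ^ 2 + β ^ 2 * ‖v‖ ^ 2 + γ ^ 2 * ‖g‖ ^ 2
        + 2 * α * β * ⟪u, v⟫ + 2 * α * γ * ⟪g, u⟫ + 2 * β * γ * ⟪g, v⟫ := by
  rw [norm_add_sq_real, norm_add_sq_real]
  simp only [norm_smul, inner_add_left, real_inner_smul_left, real_inner_smul_right,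
    Real.norm_eq_abs, mul_pow, sq_abs, real_inner_comm g u, real_inner_comm g v]
  ring

lemma norm_pair {E : Type*} [NormedAddCommGroup E] [InnerProductSpace ℝ E]
    (α β : ℝ) (u v : E) :
    ‖α • u + β • v‖ ^ 2 = α ^ 2 * ‖u‖ ^ 2 + β ^ 2 * ‖v‖ ^ 2 + 2 * α * β * ⟪u, v⟫ := by
  rw [norm_add_sq_real]
  simp only [norm_smul, real_inner_smul_left, real_inner_smul_right,
    Real.norm_eq_abs, mul_pow, sq_abs]
  ring


set_option maxHeartbeats 1000000 in
lemma nag_step {E : Type*} [NormedAddCommGroup E] [InnerProductSpace ℝ E] [CompleteSpace E]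
    (μ s θ δ : ℝ) (f : E → ℝ) (hf : Differentiable ℝ f)
    (hsc : ∀ x y : E, f x + ⟪gradient f x, y - x⟫ + μ / 2 * ‖y - x‖ ^ 2 ≤ f y)
    (hlip : ∀ x y : E, ‖gradient f x - gradient f y‖ ≤ (1 / s) * ‖x - y‖)
    (xstar : E) (hmin : ∀ x, f xstar ≤ f x)
    (hs : 0 < s) (hμ : 0 ≤ μ) (hμs : μ * s < 1)
    (A A' : ℝ) (hA' : 0 < A') (hθ : 0 < θ) (hδ : 0 < δ)
    (hse : s = θ * δ) (hBrel : θ * A' = δ * (1 + μ * A'))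
    (hAt : (1 - θ) * A' ≤ A)
    (xk zk yk xk1 zk1 : E)
    (hcase : θ ≤ 1 ∨ zk = xk)
    (hyk : yk = xk + ((θ - μ * s) / (1 - μ * s)) • (zk - xk))
    (hxk1 : xk1 = yk - s • gradient f yk)
    (hzk1 : zk1 = zk + δ • (μ • yk - μ • zk - gradient f yk)) :
    A' * (f xk1 - f xstar) + (1 + μ * A') / 2 * ‖zk1 - xstar‖ ^ 2
      ≤ A * (f xk - f xstar) + (1 + μ * A) / 2 * ‖zk - xstar‖ ^ 2 := by
  set g : E := gradient f yk with hg
  set τ : ℝ := (θ - μ * s) / (1 - μ * s) with hτdef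
  set u : E := zk - xstar with hu
  set v : E := xk - xstar with hv
  have h1μs : 0 < 1 - μ * s := by linarith
  have hLpos : 0 < θ - μ * δ := by nlinarith [hBrel, hA', hδ]
  have hμδ1 : μ * δ < 1 := by nlinarith [mul_le_mul_of_nonneg_left hLpos.le (mul_nonneg hμ hδ.le)]
  have hτ0 : 0 ≤ τ := by
    rw [hτdef]
    apply div_nonneg _ h1μs.le
    have he : μ * s = θ * (μ * δ) := by rw [hse]; ring
    nlinarith [he, hμδ1, hθ]
  have hτrel : τ * (1 - μ * (θ * δ)) = θ - μ * (θ * δ) := by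
    rw [hτdef, ← hse, div_mul_cancel₀ _ h1μs.ne']
  -- vector identities
  have hyv : yk - xstar = τ • u + (1 - τ) • v := by
    rw [hyk, hu, hv]; module
  have hyx : yk - xk = τ • u + (-τ) • v := by
    rw [hyk, hu, hv]; module
  have hzv : zk1 - xstar = (1 - δ * μ * (1 - τ)) • u + (δ * μ * (1 - τ)) • v + (-δ) • g := by
    rw [hzk1, hyk, hu, hv]; module
  -- scalar expansions
  have hY2 : ‖yk - xstar‖ ^ 2 = τ ^ 2 * ‖u‖ ^ 2 + (1 - τ) ^ 2 * ‖v‖ ^ 2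
      + 2 * τ * (1 - τ) * ⟪u, v⟫ := by rw [hyv, norm_pair]
  have hgY : ⟪g, yk - xstar⟫ = τ * ⟪g, u⟫ + (1 - τ) * ⟪g, v⟫ := by
    rw [hyv, inner_add_right, real_inner_smul_right, real_inner_smul_right]
  have hYX2 : ‖yk - xk‖ ^ 2 = τ ^ 2 * (‖u‖ ^ 2 - 2 * ⟪u, v⟫ + ‖v‖ ^ 2) := by
    rw [hyx, norm_pair]; ring
  have hgYX : ⟪g, yk - xk⟫ = τ * (⟪g, u⟫ - ⟪g, v⟫) := by
    rw [hyx, inner_add_right, real_inner_smul_right, real_inner_smul_right]; ring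
  have hZ2 : ‖zk1 - xstar‖ ^ 2 = (1 - δ * μ * (1 - τ)) ^ 2 * ‖u‖ ^ 2
      + (δ * μ * (1 - τ)) ^ 2 * ‖v‖ ^ 2 + (-δ) ^ 2 * ‖g‖ ^ 2
      + 2 * (1 - δ * μ * (1 - τ)) * (δ * μ * (1 - τ)) * ⟪u, v⟫
      + 2 * (1 - δ * μ * (1 - τ)) * (-δ) * ⟪g, u⟫
      + 2 * (δ * μ * (1 - τ)) * (-δ) * ⟪g, v⟫ := by
    rw [hzv, norm_triple]
  -- inequalities
  have hstar : f yk - f xstar ≤ (τ * ⟪g, u⟫ + (1 - τ) * ⟪g, v⟫)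
      - μ / 2 * (τ ^ 2 * ‖u‖ ^ 2 + (1 - τ) ^ 2 * ‖v‖ ^ 2 + 2 * τ * (1 - τ) * ⟪u, v⟫) := by
    have h := hsc yk xstar
    rw [show xstar - yk = -(yk - xstar) by abel, inner_neg_right, norm_neg] at h
    rw [← hg, hgY, hY2] at h
    linarith
  have hscx : (1 - θ) * A' * ((f yk - f xstar) - (f xk - f xstar))
      ≤ (1 - θ) * A' * (τ * (⟪g, u⟫ - ⟪g, v⟫)
        - μ / 2 * (τ ^ 2 * (‖u‖ ^ 2 - 2 * ⟪u, v⟫ + ‖v‖ ^ 2))) := by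
    rcases hcase with hθ1 | hzx
    · have h := hsc yk xk
      rw [show xk - yk = -(yk - xk) by abel, inner_neg_right, norm_neg] at h
      rw [← hg, hgYX, hYX2] at h
      have hbase : (f yk - f xstar) - (f xk - f xstar)
          ≤ τ * (⟪g, u⟫ - ⟪g, v⟫) - μ / 2 * (τ ^ 2 * (‖u‖ ^ 2 - 2 * ⟪u, v⟫ + ‖v‖ ^ 2)) := by
        linarith
      exact mul_le_mul_of_nonneg_left hbase (mul_nonneg (by linarith) hA'.le)
    · have huv : u = v := by rw [hu, hv, hzx]
      have hyxk : yk = xk := by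
        rw [hyk, hzx]; simp
      rw [huv, hyxk]
      apply le_of_eq
      rw [real_inner_self_eq_norm_sq]
      ring
  have hprod : 0 ≤ μ * τ * ((1 - θ) * A') * (‖u‖ ^ 2 - 2 * ⟪u, v⟫ + ‖v‖ ^ 2) := by
    rcases hcase with hθ1 | hzx
    · have huv2 : 0 ≤ ‖u‖ ^ 2 - 2 * ⟪u, v⟫ + ‖v‖ ^ 2 := by
        have := norm_sub_sq_real u v
        nlinarith [sq_nonneg ‖u - v‖]
      exact mul_nonneg (mul_nonneg (mul_nonneg hμ hτ0)
        (mul_nonneg (by linarith) hA'.le)) huv2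
    · have huv : u = v := by rw [hu, hv, hzx]
      rw [huv, real_inner_self_eq_norm_sq]
      have hz : ‖v‖ ^ 2 - 2 * ‖v‖ ^ 2 + ‖v‖ ^ 2 = 0 := by ring
      rw [hz, mul_zero]
  have hdesc : f xk1 - f xstar ≤ (f yk - f xstar) - (θ * δ) / 2 * ‖g‖ ^ 2 := by
    have h := smooth_descent s hs f hf hlip yk
    rw [← hxk1] at h
    rw [← hg] at h
    rw [hse] at h
    linarith
  have hF : 0 ≤ f xk - f xstar := by linarith [hmin xk]
  exact nag_core μ θ δ τ A A' (f xk - f xstar) (f xk1 - f xstar) (f yk - f xstar)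
    ⟪g, u⟫ ⟪g, v⟫ (‖g‖ ^ 2) (‖u‖ ^ 2) ⟪u, v⟫ (‖v‖ ^ 2) (‖zk1 - xstar‖ ^ 2)
    hμ hθ hδ hA' (by rw [← hse]; exact hμs) hBrel hτrel hAt hF (by positivity) (by positivity)
    (by have := norm_sub_sq_real u v; nlinarith [sq_nonneg ‖u - v‖])
    hdesc hstar hscx hprod hZ2


set_option maxHeartbeats 1000000

/-- Convergence rate of the unified NAG family: for all `k ≥ 0`,
`f(x_k) − f(x*) ≤ (4/t_k²)·cschc²((√μ/2)t_k)·((1/2)cosh²((√μ/2)t₀)‖x₀ − x*‖²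
+ (t₀²/4)sinhc²((√μ/2)t₀)(f(x₀) − f(x*)))`. -/
theorem unified_nag_family_convergence
    {E : Type*} [NormedAddCommGroup E] [InnerProductSpace ℝ E] [FiniteDimensional ℝ E]
    (s μ : ℝ) (hs : 0 < s) (hμ : 0 ≤ μ) (hμs : μ * s < 1)
    (f : E → ℝ) (hf : Differentiable ℝ f)
    (hsc : ∀ x y : E, f x + ⟪gradient f x, y - x⟫ + μ / 2 * ‖y - x‖ ^ 2 ≤ f y)
    (hlip : ∀ x y : E, ‖gradient f x - gradient f y‖ ≤ (1 / s) * ‖x - y‖)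
    (xstar : E) (hmin : ∀ x, f xstar ≤ f x)
    (t : ℕ → ℝ) (ht : StrictMono t) (htpos : ∀ k, 0 < t k)
    (hcond1 : ∀ k ≥ 2, 2 * Real.sqrt s / t k * cothc (Real.sqrt μ / 2 * t k) ≤ 1)
    (hcond2 : ∀ k, (1 - 2 * Real.sqrt s / t (k + 1) * cothc (Real.sqrt μ / 2 * t (k + 1))) *
        (t (k + 1) ^ 2 / 4 * sinhc (Real.sqrt μ / 2 * t (k + 1)) ^ 2)
      ≤ t k ^ 2 / 4 * sinhc (Real.sqrt μ / 2 * t k) ^ 2)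
    (x y z : ℕ → E) (hinit : x 0 = z 0)
    (hy : ∀ k, y k = x k +
      ((2 * Real.sqrt s / t (k + 1) * cothc (Real.sqrt μ / 2 * t (k + 1)) - μ * s) /
        (1 - μ * s)) • (z k - x k))
    (hx : ∀ k, x (k + 1) = y k - s • gradient f (y k))
    (hz : ∀ k, z (k + 1) = z k +
      (Real.sqrt s * t (k + 1) / 2 * tanhc (Real.sqrt μ / 2 * t (k + 1))) •
        (μ • y k - μ • z k - gradient f (y k))) :
    ∀ k, f (x k) - f xstar ≤
      4 / t k ^ 2 * cschc (Real.sqrt μ / 2 * t k) ^ 2 *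
        (1 / 2 * Real.cosh (Real.sqrt μ / 2 * t 0) ^ 2 * ‖x 0 - xstar‖ ^ 2
          + t 0 ^ 2 / 4 * sinhc (Real.sqrt μ / 2 * t 0) ^ 2 * (f (x 0) - f xstar)) := by
  set V : ℕ → ℝ := fun k => t k ^ 2 / 4 * sinhc (Real.sqrt μ / 2 * t k) ^ 2 * (f (x k) - f xstar)
    + (1 + μ * (t k ^ 2 / 4 * sinhc (Real.sqrt μ / 2 * t k) ^ 2)) / 2 * ‖z k - xstar‖ ^ 2
    with hV
  have hstepall : ∀ k, V (k + 1) ≤ V k := by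
    intro k
    have hcase : (2 * Real.sqrt s / t (k + 1) * cothc (Real.sqrt μ / 2 * t (k + 1)) ≤ 1)
        ∨ z k = x k := by
      cases k with
      | zero => exact Or.inr hinit.symm
      | succ n => exact Or.inl (hcond1 (n + 2) (by omega))
    exact nag_step μ s _ _ f hf hsc hlip xstar hmin hs hμ hμs _ _
      (Apos μ (t (k + 1)) (htpos (k + 1))) (theta_pos μ s (t (k + 1)) hs (htpos (k + 1)))
      (delta_pos μ s (t (k + 1)) hs (htpos (k + 1)))
      (ident_s μ s (t (k + 1)) hs (htpos (k + 1)))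
      (ident_BA μ s (t (k + 1)) hμ hs (htpos (k + 1)))
      (hcond2 k) (x k) (z k) (y k) (x (k + 1)) (z (k + 1)) hcase (hy k) (hx k) (hz k)
  have hVle : ∀ k, V k ≤ V 0 := by
    intro k
    induction k with
    | zero => exact le_refl _
    | succ n ih => exact (hstepall n).trans ih
  intro k
  have hAk : 0 < t k ^ 2 / 4 * sinhc (Real.sqrt μ / 2 * t k) ^ 2 := Apos μ (t k) (htpos k)
  have hA0 : 0 < t 0 ^ 2 / 4 * sinhc (Real.sqrt μ / 2 * t 0) ^ 2 := Apos μ (t 0) (htpos 0)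
  have hnonneg : 0 ≤ (1 + μ * (t k ^ 2 / 4 * sinhc (Real.sqrt μ / 2 * t k) ^ 2)) / 2
      * ‖z k - xstar‖ ^ 2 := by positivity
  have h1 : t k ^ 2 / 4 * sinhc (Real.sqrt μ / 2 * t k) ^ 2 * (f (x k) - f xstar)
      ≤ t 0 ^ 2 / 4 * sinhc (Real.sqrt μ / 2 * t 0) ^ 2 * (f (x 0) - f xstar)
        + (1 + μ * (t 0 ^ 2 / 4 * sinhc (Real.sqrt μ / 2 * t 0) ^ 2)) / 2 * ‖z 0 - xstar‖ ^ 2 := by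
    have h2 := hVle k
    rw [hV] at h2
    simp only at h2
    linarith [hnonneg]
  have hV0 : (1 + μ * (t 0 ^ 2 / 4 * sinhc (Real.sqrt μ / 2 * t 0) ^ 2)) / 2 * ‖z 0 - xstar‖ ^ 2
      = 1 / 2 * Real.cosh (Real.sqrt μ / 2 * t 0) ^ 2 * ‖x 0 - xstar‖ ^ 2 := by
    rw [← hinit, ident_B μ (t 0) hμ]
    ring
  have hsk : sinhc (Real.sqrt μ / 2 * t k) ≠ 0 := (sinhc_pos _).ne'
  have htk : t k ≠ 0 := (htpos k).ne'
  have hE0 : 4 / t k ^ 2 * cschc (Real.sqrt μ / 2 * t k) ^ 2 *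
        (1 / 2 * Real.cosh (Real.sqrt μ / 2 * t 0) ^ 2 * ‖x 0 - xstar‖ ^ 2
          + t 0 ^ 2 / 4 * sinhc (Real.sqrt μ / 2 * t 0) ^ 2 * (f (x 0) - f xstar))
      = (1 / 2 * Real.cosh (Real.sqrt μ / 2 * t 0) ^ 2 * ‖x 0 - xstar‖ ^ 2
          + t 0 ^ 2 / 4 * sinhc (Real.sqrt μ / 2 * t 0) ^ 2 * (f (x 0) - f xstar))
        / (t k ^ 2 / 4 * sinhc (Real.sqrt μ / 2 * t k) ^ 2) := by
    unfold cschc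
    field_simp
  rw [hE0, le_div_iff₀ hAk]
  nlinarith [h1, hV0]
end

section
/- Let p ≥ 2 be a real number and let S : [0,∞) → ℝ be differentiable with S(0) = 0 and S′(t) = (1 + S(t)^p)^{1/p} for all t ≥ 0. Then there exists a constant C_p > 0 such that S(t)/e^t → C_p as t → ∞ (i.e., S(t) is asymptotically equivalent to C_p·e^t). In particular, for p = 2 one has C_p = 1/2. -/
lemma sqrt_one_add_sq_lipschitz : ∀ t : ℝ, LipschitzWith 1 (fun x : ℝ => Real.sqrt (1 + x ^ 2)) := by
  intro _
  rw [lipschitzWith_iff_dist_le_mul]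
  intro x y
  rw [Real.dist_eq, Real.dist_eq, NNReal.coe_one, one_mul]
  set a := Real.sqrt (1 + x ^ 2) with hadef
  set b := Real.sqrt (1 + y ^ 2) with hbdef
  have ha0 : 0 ≤ a := Real.sqrt_nonneg _
  have hb0 : 0 ≤ b := Real.sqrt_nonneg _
  have ha2 : a ^ 2 = 1 + x ^ 2 := Real.sq_sqrt (by positivity)
  have hb2 : b ^ 2 = 1 + y ^ 2 := Real.sq_sqrt (by positivity)
  have hab : 1 + x * y ≤ a * b := by
    nlinarith [sq_nonneg (x - y), mul_nonneg ha0 hb0, sq_nonneg (a*b + 1 + x*y)]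
  have hsq : (a - b) ^ 2 ≤ (x - y) ^ 2 := by nlinarith
  calc |a - b| = Real.sqrt ((a - b) ^ 2) := (Real.sqrt_sq_eq_abs _).symm
    _ ≤ Real.sqrt ((x - y) ^ 2) := Real.sqrt_le_sqrt hsq
    _ = |x - y| := Real.sqrt_sq_eq_abs _

lemma rpow_lb_one {p x : ℝ} (hp : 0 < p) (hx : 0 ≤ x) : 1 ≤ (1 + x ^ p) ^ (1 / p) := by
  have hxp : 0 ≤ x ^ p := Real.rpow_nonneg hx p
  calc (1:ℝ) = 1 ^ (1/p) := (Real.one_rpow _).symm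
    _ ≤ (1 + x ^ p) ^ (1/p) := Real.rpow_le_rpow zero_le_one (by linarith) (by positivity)

lemma rpow_lb_self {p x : ℝ} (hp : 0 < p) (hx : 0 ≤ x) : x ≤ (1 + x ^ p) ^ (1 / p) := by
  have hxp : 0 ≤ x ^ p := Real.rpow_nonneg hx p
  calc x = (x ^ p) ^ (1/p) := by
        rw [← Real.rpow_mul hx, mul_one_div, div_self hp.ne', Real.rpow_one]
    _ ≤ (1 + x ^ p) ^ (1/p) := Real.rpow_le_rpow hxp (by linarith) (by positivity)

lemma rpow_ub {p x : ℝ} (hp : 1 ≤ p) (hx : 0 ≤ x) : (1 + x ^ p) ^ (1 / p) ≤ 1 + x := by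
  have h := NNReal.rpow_add_rpow_le_add 1 x.toNNReal hp
  rw [← NNReal.coe_le_coe] at h
  push_cast [Real.coe_toNNReal x hx, Real.one_rpow] at h
  exact h

/-- The order-`p` hyperbolic sine grows exponentially: if `S(0) = 0` and
`S′(t) = (1 + S(t)^p)^{1/p}` on `[0, ∞)`, then there is a constant `C_p > 0` such that
`S(t)/e^t → C_p` as `t → ∞`; moreover `C_p = 1/2` when `p = 2`. -/
theorem sinhp_grows_exponentially
    (p : ℝ) (hp : 2 ≤ p)
    (S : ℝ → ℝ) (hS0 : S 0 = 0)
    (hS : ∀ t ∈ Set.Ici (0 : ℝ),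
      HasDerivWithinAt S ((1 + S t ^ p) ^ (1 / p)) (Set.Ici 0) t) :
    ∃ C : ℝ, 0 < C ∧
      Filter.Tendsto (fun t => S t / Real.exp t) Filter.atTop (nhds C) ∧
      (p = 2 → C = 1 / 2) := by
  have hp0 : (0:ℝ) < p := by linarith
  have hp1 : (1:ℝ) ≤ p := by linarith
  have contS : ContinuousOn S (Set.Ici 0) := fun t ht => (hS t ht).continuousWithinAt
  have hderivIoi : ∀ x ∈ Set.Ioi (0:ℝ),
      HasDerivWithinAt S ((1 + S x ^ p) ^ (1 / p)) (Set.Ioi 0) x :=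
    fun x hx => (hS x (Set.mem_Ici.mpr (le_of_lt hx))).mono Set.Ioi_subset_Ici_self
  -- derivative is always nonnegative (even without sign info on S)
  have hDnn : ∀ x : ℝ, 0 ≤ (1 + S x ^ p) ^ (1 / p) := by
    intro x
    rcases le_or_gt 0 (1 + S x ^ p) with h | h
    · exact Real.rpow_nonneg h _
    · rw [Real.rpow_def_of_neg h]
      have hcos : 0 ≤ Real.cos (1 / p * Real.pi) := by
        apply Real.cos_nonneg_of_mem_Icc
        constructor
        · have : 0 ≤ 1 / p * Real.pi := by positivity
          linarith [Real.pi_pos]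
        · have h2 : 1 / p ≤ 1 / 2 := by
            apply one_div_le_one_div_of_le <;> linarith
          calc 1 / p * Real.pi ≤ 1 / 2 * Real.pi :=
                mul_le_mul_of_nonneg_right h2 Real.pi_pos.le
            _ = Real.pi / 2 := by ring
      positivity
  have monoS : MonotoneOn S (Set.Ici 0) := by
    apply monotoneOn_of_hasDerivWithinAt_nonneg (convex_Ici 0) contS
    · intro x hx
      rw [interior_Ici] at hx ⊢
      exact hderivIoi x hx
    · intro x _
      exact hDnn x
  have Snn : ∀ t : ℝ, 0 ≤ t → 0 ≤ S t := by
    intro t ht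
    have := monoS (Set.self_mem_Ici) ht ht
    rwa [hS0] at this
  -- bounds on the derivative
  have hd1 : ∀ t : ℝ, 0 ≤ t → 1 ≤ (1 + S t ^ p) ^ (1 / p) :=
    fun t ht => rpow_lb_one hp0 (Snn t ht)
  have hdS : ∀ t : ℝ, 0 ≤ t → S t ≤ (1 + S t ^ p) ^ (1 / p) :=
    fun t ht => rpow_lb_self hp0 (Snn t ht)
  have hdub : ∀ t : ℝ, 0 ≤ t → (1 + S t ^ p) ^ (1 / p) ≤ 1 + S t :=
    fun t ht => rpow_ub hp1 (Snn t ht)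
  -- S t ≥ t
  have hSt : ∀ t : ℝ, 0 ≤ t → t ≤ S t := by
    have hm : MonotoneOn (fun t => S t - t) (Set.Ici 0) := by
      apply monotoneOn_of_hasDerivWithinAt_nonneg (convex_Ici 0)
        (f' := fun x => (1 + S x ^ p) ^ (1 / p) - 1)
        (contS.sub continuousOn_id)
      · intro x hx
        rw [interior_Ici] at hx ⊢
        exact (hderivIoi x hx).sub (hasDerivWithinAt_id x _)
      · intro x hx
        rw [interior_Ici] at hx
        have := hd1 x hx.le
        linarith
    intro t ht
    have := hm Set.self_mem_Ici ht ht
    simp only [hS0] at this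
    linarith
  have contE : ContinuousOn (fun t : ℝ => Real.exp (-t)) (Set.Ici 0) :=
    (Real.continuous_exp.comp continuous_neg).continuousOn
  have hE : ∀ t : ℝ, HasDerivAt (fun s : ℝ => Real.exp (-s)) (-Real.exp (-t)) t := by
    intro t
    simpa [Function.comp_def] using (Real.hasDerivAt_exp (-t)).comp t (hasDerivAt_neg t)
  -- h := S t * exp (-t) is monotone on [0, ∞)
  have monoh : MonotoneOn (fun t => S t * Real.exp (-t)) (Set.Ici 0) := by
    apply monotoneOn_of_hasDerivWithinAt_nonneg (convex_Ici 0)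
      (f' := fun x => ((1 + S x ^ p) ^ (1 / p) - S x) * Real.exp (-x))
      (contS.mul contE)
    · intro x hx
      rw [interior_Ici] at hx ⊢
      have := (hderivIoi x hx).mul ((hE x).hasDerivWithinAt (s := Set.Ioi 0))
      exact this.congr_deriv (by ring)
    · intro x hx
      rw [interior_Ici] at hx
      have h1 := hdS x hx.le
      have h2 := Real.exp_nonneg (-x)
      nlinarith
  -- k := S t * exp (-t) + exp (-t) is antitone on [0, ∞)
  have antik : AntitoneOn (fun t => S t * Real.exp (-t) + Real.exp (-t)) (Set.Ici 0) := by
    apply antitoneOn_of_hasDerivWithinAt_nonpos (convex_Ici 0)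
      (f' := fun x => ((1 + S x ^ p) ^ (1 / p) - S x - 1) * Real.exp (-x))
      ((contS.mul contE).add contE)
    · intro x hx
      rw [interior_Ici] at hx ⊢
      have := ((hderivIoi x hx).mul ((hE x).hasDerivWithinAt (s := Set.Ioi 0))).add
        ((hE x).hasDerivWithinAt (s := Set.Ioi 0))
      exact this.congr_deriv (by ring)
    · intro x hx
      rw [interior_Ici] at hx
      have h1 := hdub x hx.le
      have h2 := Real.exp_nonneg (-x)
      nlinarith
  have hbound : ∀ t : ℝ, 0 ≤ t → S t * Real.exp (-t) ≤ 1 := by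
    intro t ht
    have := antik Set.self_mem_Ici ht ht
    simp only [hS0, zero_mul, zero_add, neg_zero, Real.exp_zero] at this
    have h2 := Real.exp_pos (-t)
    linarith
  -- the auxiliary monotone global function
  set H : ℝ → ℝ := fun t => S (max t 0) * Real.exp (-(max t 0)) with hHdef
  have Hmono : Monotone H := by
    intro a b hab
    exact monoh (Set.mem_Ici.mpr (le_max_right a 0)) (Set.mem_Ici.mpr (le_max_right b 0))
      (max_le_max hab le_rfl)
  have Hbdd : BddAbove (Set.range H) := by
    refine ⟨1, ?_⟩
    rintro y ⟨t, rfl⟩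
    exact hbound (max t 0) (le_max_right t 0)
  have Htendsto : Filter.Tendsto H Filter.atTop (nhds (⨆ t, H t)) :=
    tendsto_atTop_ciSup Hmono Hbdd
  set C : ℝ := ⨆ t, H t with hCdef
  have hCpos : 0 < C := by
    have h1 : H 1 ≤ C := le_ciSup Hbdd 1
    have h2 : (1:ℝ) ≤ S (max 1 0) := by
      have := hSt (max 1 0) (le_max_right 1 0)
      have hm : (1:ℝ) ≤ max 1 0 := le_max_left 1 0
      linarith
    have h3 := Real.exp_pos (-(max (1:ℝ) 0))
    have : 0 < H 1 := by
      simp only [hHdef]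
      nlinarith
    linarith
  have htend : Filter.Tendsto (fun t => S t / Real.exp t) Filter.atTop (nhds C) := by
    apply Htendsto.congr'
    filter_upwards [Filter.eventually_ge_atTop (0:ℝ)] with t ht
    simp only [hHdef, max_eq_left ht]
    rw [Real.exp_neg, div_eq_mul_inv]
  refine ⟨C, hCpos, htend, ?_⟩
  -- the p = 2 case
  intro hp2
  subst hp2
  have hrw : ∀ x : ℝ, (1 + x ^ (2:ℝ)) ^ ((1:ℝ) / 2) = Real.sqrt (1 + x ^ 2) := by
    intro x
    have hb : x ^ (2:ℝ) = x ^ 2 := by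
      rw [show (2:ℝ) = ((2:ℕ):ℝ) by norm_num, Real.rpow_natCast]
    rw [hb, ← Real.sqrt_eq_rpow]
  have hSeq : ∀ t : ℝ, 0 ≤ t → S t = Real.sinh t := by
    intro t ht
    have key : Set.EqOn S Real.sinh (Set.Icc 0 t) := by
      apply ODE_solution_unique (v := fun _ x => Real.sqrt (1 + x ^ 2)) (K := 1)
        sqrt_one_add_sq_lipschitz
        (contS.mono Set.Icc_subset_Ici_self)
      · intro s hs
        have := (hS s hs.1).mono (Set.Ici_subset_Ici.mpr hs.1)
        rwa [hrw (S s)] at this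
      · exact Real.continuous_sinh.continuousOn
      · intro s _
        have hc : Real.cosh s = Real.sqrt (1 + Real.sinh s ^ 2) := by
          rw [show (1:ℝ) + Real.sinh s ^ 2 = Real.cosh s ^ 2 by rw [Real.cosh_sq]; ring,
            Real.sqrt_sq (Real.cosh_pos s).le]
        exact (hc ▸ (Real.hasDerivAt_sinh s)).hasDerivWithinAt
      · rw [hS0, Real.sinh_zero]
    exact key ⟨ht, le_refl t⟩
  have hsinh : Filter.Tendsto (fun t : ℝ => Real.sinh t / Real.exp t)
      Filter.atTop (nhds (1/2)) := by
    have heq : ∀ t : ℝ, Real.sinh t / Real.exp t = (1 - Real.exp (-(2*t))) / 2 := by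
      intro t
      have h := Real.exp_ne_zero t
      rw [Real.sinh_eq, Real.exp_neg, show -(2*t) = -t + -t by ring, Real.exp_add,
        Real.exp_neg]
      rw [div_div, div_eq_div_iff (by positivity) (by norm_num)]
      field_simp
    simp only [heq]
    have h2t : Filter.Tendsto (fun t : ℝ => 2*t) Filter.atTop Filter.atTop :=
      Filter.Tendsto.const_mul_atTop two_pos Filter.tendsto_id
    have hz : Filter.Tendsto (fun t : ℝ => Real.exp (-(2*t))) Filter.atTop (nhds 0) :=
      Real.tendsto_exp_neg_atTop_nhds_zero.comp h2t
    have := ((tendsto_const_nhds (x := (1:ℝ))).sub hz).div_const 2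
    simpa using this
  have htend2 : Filter.Tendsto (fun t => S t / Real.exp t) Filter.atTop (nhds (1/2)) := by
    apply hsinh.congr'
    filter_upwards [Filter.eventually_ge_atTop (0:ℝ)] with t ht
    rw [hSeq t ht]
  exact tendsto_nhds_unique htend htend2
end

section
/- Let E be a finite-dimensional real inner product space, p ≥ 2 a real number, C > 0, μ ≥ 0. Let S : [0,∞) → ℝ be differentiable with S(0) = 0 and S′(t) = (1 + S(t)^p)^{1/p}, and define cosh_p(x) = (1 + S(x)^p)^{1/p}, sinhc_p(x) = S(x)/x for x > 0 with sinhc_p(0) = 1, tanhc_p(x) = sinhc_p(x)/cosh_p(x), cothc_p(x) = 1/tanhc_p(x). Let h : E → ℝ be convex and differentiable, f : E → ℝ differentiable and μ-uniformly convex with respect to h, and x* a minimizer of f. Suppose X, Z : [0,∞) → E are continuous, X is differentiable and t ↦ ∇h(Z(t)) is differentiable on (0,∞), and for all t > 0: Ẋ(t) = (p/t)·cothc_p(C^{1/p}·μ^{1/p}·t)·(Z(t) − X(t)) and d/dt[∇h(Z(t))] = C·p·t^{p−1}·tanhc_p(C^{1/p}·μ^{1/p}·t)^{p−1}·(μ·∇h(X(t))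 − μ·∇h(Z(t)) − ∇f(X(t))). Then the energy function 𝓔(t) = cosh_p(C^{1/p}·μ^{1/p}·t)^p·D_h(x*, Z(t)) + C·t^p·sinhc_p(C^{1/p}·μ^{1/p}·t)^p·(f(X(t)) − f(x*)) is monotonically nonincreasing on [0,∞). -/
open scoped RealInnerProductSpace
open Filter Set Asymptotics

section Helpers

variable {E : Type*} [NormedAddCommGroup E] [InnerProductSpace ℝ E] [FiniteDimensional ℝ E]
variable {h : E → ℝ}

lemma hasDerivAt_comp_line (hdiff : Differentiable ℝ h) (x v : E) :
    HasDerivAt (fun s : ℝ => h (x + s • v)) ⟪gradient h x, v⟫ 0 := by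
  have hγ : HasDerivAt (fun s : ℝ => x + s • v) v 0 := by
    simpa using ((hasDerivAt_id (0 : ℝ)).smul_const v).const_add x
  have hf : HasFDerivAt h (InnerProductSpace.toDual ℝ E (gradient h x)) x :=
    (hdiff x).hasGradientAt.hasFDerivAt
  have hf' : HasFDerivAt h (InnerProductSpace.toDual ℝ E (gradient h x)) (x + (0:ℝ) • v) := by
    simpa using hf
  have := hf'.comp_hasDerivAt (0 : ℝ) hγ
  simpa [InnerProductSpace.toDual_apply_apply, Function.comp_def] using this

lemma grad_ineq (hconv : ConvexOn ℝ Set.univ h) (hdiff : Differentiable ℝ h) (x y : E) :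
    h x + ⟪gradient h x, y - x⟫ ≤ h y := by
  have hφconv : ConvexOn ℝ Set.univ (fun s : ℝ => h (x + s • (y - x))) := by
    have := hconv.comp_affineMap (AffineMap.lineMap x y)
    simpa [Function.comp_def, AffineMap.lineMap_apply, add_comm, vsub_eq_sub, vadd_eq_add] using this
  have hd := hasDerivAt_comp_line hdiff x (y - x)
  have := hφconv.le_slope_of_hasDerivAt (Set.mem_univ (0:ℝ)) (Set.mem_univ (1:ℝ)) one_pos hd
  simp only [slope_def_field] at this
  have h1 : x + (1:ℝ) • (y - x) = y := by simp
  have h0 : x + (0:ℝ) • (y - x) = x := by simp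
  rw [h1, h0] at this
  simp only [div_one, sub_zero] at this
  linarith [this]

lemma grad_bounded (hconv : ConvexOn ℝ Set.univ h) (hdiff : Differentiable ℝ h) (x : E) :
    ∃ R : ℝ, ∀ z ∈ Metric.ball x 1, ‖gradient h z‖ ≤ R := by
  have hcomp : IsCompact (Metric.closedBall x 2) := isCompact_closedBall x 2
  have hne : (Metric.closedBall x 2).Nonempty := ⟨x, by simp⟩
  have hcont : ContinuousOn h (Metric.closedBall x 2) := hdiff.continuous.continuousOn
  obtain ⟨wM, _, hwM⟩ := hcomp.exists_isMaxOn hne hcont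
  obtain ⟨wm, _, hwm⟩ := hcomp.exists_isMinOn hne hcont
  refine ⟨h wM - h wm, fun z hz => ?_⟩
  have hzball : z ∈ Metric.closedBall x 2 := by
    have := Metric.mem_ball.mp hz
    exact Metric.mem_closedBall.mpr (by linarith)
  rcases eq_or_ne (gradient h z) 0 with h0 | h0
  · rw [h0, norm_zero]
    have h1 : h z ≤ h wM := hwM hzball
    have h2 : h wm ≤ h z := hwm hzball
    linarith
  · set v : E := ‖gradient h z‖⁻¹ • gradient h z with hv
    have hvnorm : ‖v‖ = 1 := by
      rw [hv, norm_smul, norm_inv, norm_norm, inv_mul_cancel₀ (norm_ne_zero_iff.mpr h0)]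
    have hzv : z + v ∈ Metric.closedBall x 2 := by
      have h1 : dist z x < 1 := Metric.mem_ball.mp hz
      have h3 : dist (z + v) x ≤ dist (z + v) z + dist z x := dist_triangle _ _ _
      have h2 : dist (z + v) z = ‖v‖ := by simp [dist_eq_norm]
      rw [h2, hvnorm] at h3
      exact Metric.mem_closedBall.mpr (by linarith)
    have hineq := grad_ineq hconv hdiff z (z + v)
    have hsub : z + v - z = v := by abel
    rw [hsub] at hineq
    have hinner : ⟪gradient h z, v⟫ = ‖gradient h z‖ := by
      rw [hv, real_inner_smul_right, real_inner_self_eq_norm_sq]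
      field_simp [norm_ne_zero_iff.mpr h0]
    rw [hinner] at hineq
    have hM : h (z + v) ≤ h wM := hwM hzv
    have hm : h wm ≤ h z := hwm hzball
    linarith

lemma subgrad_eq (hdiff : Differentiable ℝ h) (x L : E)
    (hL : ∀ y, h x + ⟪L, y - x⟫ ≤ h y) : L = gradient h x := by
  have key : ∀ v : E, ⟪L, v⟫ ≤ ⟪gradient h x, v⟫ := by
    intro v
    have hd := hasDerivAt_comp_line hdiff x v
    have hslope : Tendsto (slope (fun s : ℝ => h (x + s • v)) 0) (nhdsWithin 0 (Set.Ioi 0))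
        (nhds ⟪gradient h x, v⟫) :=
      (hasDerivAt_iff_tendsto_slope.mp hd).mono_left
        (nhdsWithin_mono _ (fun s hs => ne_of_gt hs))
    refine ge_of_tendsto hslope ?_
    filter_upwards [self_mem_nhdsWithin] with s hs
    have hspos : (0:ℝ) < s := hs
    have := hL (x + s • v)
    have hx0 : x + (0:ℝ) • v = x := by simp
    rw [slope_def_field]
    have hsub : x + s • v - x = s • v := by abel
    rw [hsub, real_inner_smul_right] at this
    rw [hx0, sub_zero, le_div_iff₀ hspos]
    nlinarith
  have h1 := key (L - gradient h x)
  have h2 : ⟪L - gradient h x, L - gradient h x⟫ ≤ 0 := by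
    rw [inner_sub_left] at *
    linarith
  have := real_inner_self_nonpos.mp h2
  exact sub_eq_zero.mp this

theorem grad_continuous (hconv : ConvexOn ℝ Set.univ h) (hdiff : Differentiable ℝ h) :
    Continuous (gradient h) := by
  rw [continuous_iff_continuousAt]
  intro x
  rw [ContinuousAt, Filter.tendsto_iff_seq_tendsto]
  intro u hu
  by_contra hcon
  obtain ⟨R, hR⟩ := grad_bounded hconv hdiff x
  rw [Metric.tendsto_atTop] at hcon
  push_neg at hcon
  obtain ⟨ε, εpos, hfreq⟩ := hcon
  have hfreq' : ∃ᶠ n in atTop, ε ≤ dist ((gradient h ∘ u) n) (gradient h x) := by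
    rw [Filter.frequently_atTop]
    intro N; obtain ⟨n, hn, hd⟩ := hfreq N; exact ⟨n, hn, hd⟩
  have hball : ∀ᶠ n in atTop, u n ∈ Metric.ball x 1 :=
    hu (Metric.ball_mem_nhds x one_pos)
  obtain ⟨φ, hφmono, hφ⟩ := Filter.extraction_of_frequently_atTop
    (hfreq'.and_eventually hball)
  set y : ℕ → E := fun k => gradient h (u (φ k)) with hy
  have hybd : ∀ k, y k ∈ Metric.closedBall (0 : E) R := by
    intro k
    simp only [Metric.mem_closedBall, dist_zero_right]
    exact hR _ (hφ k).2
  obtain ⟨a, _, ψ, hψmono, hψ⟩ :=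
    tendsto_subseq_of_bounded Metric.isBounded_closedBall hybd
  have huψ : Tendsto (fun k => u (φ (ψ k))) atTop (nhds x) :=
    hu.comp ((hφmono.comp hψmono).tendsto_atTop)
  have hasub : ∀ w, h x + ⟪a, w - x⟫ ≤ h w := by
    intro w
    have hk : ∀ k, h (u (φ (ψ k))) + ⟪y (ψ k), w - u (φ (ψ k))⟫ ≤ h w :=
      fun k => grad_ineq hconv hdiff _ w
    have hlim : Tendsto (fun k => h (u (φ (ψ k))) + ⟪y (ψ k), w - u (φ (ψ k))⟫)
        atTop (nhds (h x + ⟪a, w - x⟫)) := by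
      apply Tendsto.add
      · exact (hdiff.continuous.tendsto x).comp huψ
      · exact Tendsto.inner hψ (Tendsto.sub tendsto_const_nhds huψ)
    exact le_of_tendsto hlim (Eventually.of_forall hk)
  have haeq : a = gradient h x := subgrad_eq hdiff x a hasub
  have hdist : Tendsto (fun k => dist (y (ψ k)) (gradient h x)) atTop (nhds 0) := by
    rw [← haeq]
    exact tendsto_iff_dist_tendsto_zero.mp hψ
  have : ε ≤ 0 := ge_of_tendsto hdist (Eventually.of_forall (fun k => (hφ (ψ k)).1))
  linarith



lemma breg_nonneg (hconv : ConvexOn ℝ Set.univ h) (hdiff : Differentiable ℝ h) (y x : E) :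
    0 ≤ breg h y x := by
  have := grad_ineq hconv hdiff x y
  simp only [breg]
  linarith

lemma hasDerivAt_breg_comp
    (hconv : ConvexOn ℝ Set.univ h) (hdiff : Differentiable ℝ h)
    (y : E) (Z : ℝ → E) (t : ℝ) (g' : E)
    (hg : HasDerivAt (fun τ => gradient h (Z τ)) g' t)
    (hZ : ContinuousAt Z t) :
    HasDerivAt (fun τ => breg h y (Z τ)) (-⟪g', y - Z t⟫) t := by
  set g : ℝ → E := fun τ => gradient h (Z τ) with hgdef
  have hbound : ∀ s, |(breg h y (Z s) - breg h y (Z t)) + ⟪g s - g t, y - Z t⟫|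
      ≤ ‖g s - g t‖ * ‖Z s - Z t‖ := by
    intro s
    have husval : (breg h y (Z s) - breg h y (Z t)) + ⟪g s - g t, y - Z t⟫
        = breg h (Z t) (Z s) := by
      simp only [breg, hgdef, inner_sub_left, inner_sub_right]
      ring
    have hup : (breg h y (Z s) - breg h y (Z t)) + ⟪g s - g t, y - Z t⟫
        - ⟪g s - g t, Z s - Z t⟫ = -breg h (Z s) (Z t) := by
      simp only [breg, hgdef, inner_sub_left, inner_sub_right]
      ring
    have h1 : 0 ≤ breg h (Z t) (Z s) := breg_nonneg hconv hdiff _ _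
    have h2 : 0 ≤ breg h (Z s) (Z t) := breg_nonneg hconv hdiff _ _
    have hcs : |⟪g s - g t, Z s - Z t⟫| ≤ ‖g s - g t‖ * ‖Z s - Z t‖ :=
      abs_real_inner_le_norm _ _
    have hnn : (0:ℝ) ≤ ‖g s - g t‖ * ‖Z s - Z t‖ := by positivity
    have habs := abs_le.mp hcs
    rw [abs_le]
    constructor
    · rw [husval]; linarith
    · have h3 : (breg h y (Z s) - breg h y (Z t)) + ⟪g s - g t, y - Z t⟫
          ≤ ⟪g s - g t, Z s - Z t⟫ := by linarith [hup]
      linarith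
  rw [hasDerivAt_iff_isLittleO]
  have hglo : (fun s => g s - g t - (s - t) • g') =o[nhds t] (fun s => s - t) :=
    hasDerivAt_iff_isLittleO.mp hg
  have e1 : (fun s => g s - g t) =O[nhds t] (fun s => s - t) := hg.isBigO_sub
  have e2 : (fun s => Z s - Z t) =o[nhds t] (fun _ => (1:ℝ)) := by
    rw [isLittleO_one_iff]
    simpa using hZ.tendsto.sub (tendsto_const_nhds (x := Z t))
  have e3 : (fun s => ‖g s - g t‖ * ‖Z s - Z t‖) =o[nhds t] (fun s => (s - t) * 1) :=
    (isBigO_norm_left.mpr e1).mul_isLittleO (isLittleO_norm_left.mpr e2)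
  have e3' : (fun s => ‖g s - g t‖ * ‖Z s - Z t‖) =o[nhds t] (fun s => s - t) := by
    simpa using e3
  have hu : (fun s => (breg h y (Z s) - breg h y (Z t)) + ⟪g s - g t, y - Z t⟫)
      =o[nhds t] (fun s => s - t) := by
    refine IsBigO.trans_isLittleO ?_ e3'
    apply isBigO_of_le
    intro s
    rw [Real.norm_eq_abs, Real.norm_eq_abs]
    exact (hbound s).trans (le_abs_self _)
  have hv : (fun s => (⟪g s - g t - (s - t) • g', y - Z t⟫ : ℝ))
      =o[nhds t] (fun s => s - t) := by
    refine IsBigO.trans_isLittleO ?_ hglo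
    apply IsBigO.of_bound (‖y - Z t‖)
    filter_upwards with s
    rw [Real.norm_eq_abs]
    calc |⟪g s - g t - (s - t) • g', y - Z t⟫| ≤ ‖g s - g t - (s - t) • g'‖ * ‖y - Z t‖ :=
          abs_real_inner_le_norm _ _
      _ = ‖y - Z t‖ * ‖g s - g t - (s - t) • g'‖ := mul_comm _ _
  refine (hu.sub hv).congr_left fun s => ?_
  simp only [breg, hgdef, inner_sub_left, real_inner_smul_left, smul_eq_mul]
  ring



lemma core_deriv {h : E → ℝ} (f : E → ℝ) (hconv : ConvexOn ℝ Set.univ h)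
    (hhdiff : Differentiable ℝ h) (hfdiff : Differentiable ℝ f)
    (xstar : E) (X Z : ℝ → E) (μ t q : ℝ) (φ ψ : ℝ → ℝ)
    (hφ' : HasDerivAt φ (μ * q) t) (hψ' : HasDerivAt ψ q t)
    (hφt : φ t ≠ 0) (hψt : ψ t ≠ 0)
    (hg : HasDerivAt (fun τ => gradient h (Z τ))
      ((q / φ t) • (μ • gradient h (X t) - μ • gradient h (Z t) - gradient f (X t))) t)
    (hX : HasDerivAt X ((q / ψ t) • (Z t - X t)) t)
    (hZc : ContinuousAt Z t) :
    HasDerivAt (fun τ => φ τ * breg h xstar (Z τ) + ψ τ * (f (X τ) - f xstar))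
      (q * (μ * breg h xstar (X t) - μ * breg h (Z t) (X t) - breg f xstar (X t))) t := by
  have hD := hasDerivAt_breg_comp hconv hhdiff xstar Z t _ hg hZc
  have hfX : HasDerivAt (fun τ => f (X τ)) (q / ψ t * ⟪gradient f (X t), Z t - X t⟫) t := by
    have hfg : HasFDerivAt f (InnerProductSpace.toDual ℝ E (gradient f (X t))) (X t) :=
      (hfdiff (X t)).hasGradientAt.hasFDerivAt
    simpa [InnerProductSpace.toDual_apply_apply, Function.comp_def] using hfg.comp_hasDerivAt t hX
  have h1 := hφ'.mul hD
  have h2 := hψ'.mul (hfX.sub_const (f xstar))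
  have h3 : HasDerivAt (fun τ => φ τ * breg h xstar (Z τ) + ψ τ * (f (X τ) - f xstar)) _ t :=
    h1.add h2
  convert h3 using 1
  simp only [breg, inner_sub_left, inner_sub_right, real_inner_smul_left,
    real_inner_smul_right, smul_eq_mul]
  field_simp
  ring

end Helpers

section SFacts

variable {p : ℝ} {S : ℝ → ℝ}

lemma S_nonneg (hp : 2 ≤ p) (hS0 : S 0 = 0)
    (hS : ∀ t ∈ Set.Ici (0 : ℝ),
      HasDerivWithinAt S ((1 + S t ^ p) ^ (1 / p)) (Set.Ici 0) t) :
    ∀ t ∈ Set.Ici (0:ℝ), 0 ≤ S t := by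
  have hp0 : p ≠ 0 := by linarith
  by_contra hcon
  push_neg at hcon
  obtain ⟨t0, ht0, hneg⟩ := hcon
  set A : Set ℝ := {t : ℝ | 0 ≤ t ∧ S t < 0} with hA
  have hAne : A.Nonempty := ⟨t0, ht0, hneg⟩
  have hbdd : BddBelow A := ⟨0, fun a ha => ha.1⟩
  set τ := sInf A with hτ
  have hτ0 : 0 ≤ τ := le_csInf hAne (fun b hb => hb.1)
  have hclos : τ ∈ closure A := csInf_mem_closure hAne hbdd
  have hAsub : A ⊆ Set.Ici 0 := fun a ha => ha.1
  have hSc : ContinuousWithinAt S (Set.Ici 0) τ := (hS τ hτ0).continuousWithinAt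
  have hneA : (nhdsWithin τ A).NeBot := mem_closure_iff_nhdsWithin_neBot.mp hclos
  have hSτle : S τ ≤ 0 := by
    refine le_of_tendsto ((hSc.mono hAsub).tendsto) ?_
    filter_upwards [self_mem_nhdsWithin] with a ha
    exact ha.2.le
  have hSτge : 0 ≤ S τ := by
    rcases eq_or_lt_of_le hτ0 with heq | hlt
    · rw [← heq, hS0]
    · have hsub : Set.Ico 0 τ ⊆ Set.Ici 0 := Set.Ico_subset_Ici_self
      have hclos2 : τ ∈ closure (Set.Ico 0 τ) := by
        rw [closure_Ico (ne_of_lt hlt)]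
        exact ⟨hτ0, le_refl τ⟩
      have hne2 : (nhdsWithin τ (Set.Ico 0 τ)).NeBot :=
        mem_closure_iff_nhdsWithin_neBot.mp hclos2
      refine ge_of_tendsto ((hSc.mono hsub).tendsto) ?_
      filter_upwards [self_mem_nhdsWithin] with a ha
      by_contra hSa
      push_neg at hSa
      have : a ∈ A := ⟨ha.1, hSa⟩
      exact absurd (csInf_le hbdd this) (not_le.mpr ha.2)
  have hSτ : S τ = 0 := le_antisymm hSτle hSτge
  have hder := hS τ hτ0
  rw [hSτ] at hder
  have hval : (1 + (0:ℝ) ^ p) ^ (1 / p) = 1 := by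
    rw [Real.zero_rpow hp0, add_zero, Real.one_rpow]
  rw [hval] at hder
  have hslope := hasDerivWithinAt_iff_tendsto_slope.mp hder
  have hAsub' : A ⊆ Set.Ici 0 \ {τ} := by
    intro a ha
    refine ⟨ha.1, ?_⟩
    simp only [Set.mem_singleton_iff]
    intro heq
    have h2 := ha.2
    rw [heq, hSτ] at h2
    exact absurd h2 (lt_irrefl 0)
  have hslopeA : Tendsto (slope S τ) (nhdsWithin τ A) (nhds 1) :=
    hslope.mono_left (nhdsWithin_mono _ hAsub')
  have : (1:ℝ) ≤ 0 := by
    refine le_of_tendsto hslopeA ?_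
    filter_upwards [self_mem_nhdsWithin] with a ha
    have haτ : τ < a := by
      have hle : τ ≤ a := by rw [hτ]; exact csInf_le hbdd ha
      rcases hle.lt_or_eq with hlt | heq
      · exact hlt
      · exfalso
        have h2 := ha.2
        rw [← heq, hSτ] at h2
        exact absurd h2 (lt_irrefl 0)
    rw [slope_def_field, hSτ, sub_zero]
    exact div_nonpos_of_nonpos_of_nonneg ha.2.le (by linarith)
  linarith

lemma S_pos (hp : 2 ≤ p) (hS0 : S 0 = 0)
    (hS : ∀ t ∈ Set.Ici (0 : ℝ),
      HasDerivWithinAt S ((1 + S t ^ p) ^ (1 / p)) (Set.Ici 0) t) :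
    ∀ t : ℝ, 0 < t → 0 < S t := by
  have hnn := S_nonneg hp hS0 hS
  have hmono : StrictMonoOn S (Set.Ici 0) := by
    refine strictMonoOn_of_deriv_pos (convex_Ici 0)
      (fun t ht => (hS t ht).continuousWithinAt) ?_
    intro t ht
    rw [interior_Ici] at ht
    have hda : HasDerivAt S ((1 + S t ^ p) ^ (1 / p)) t :=
      (hS t (Set.mem_Ici.mpr (Set.mem_Ioi.mp ht).le)).hasDerivAt (Ici_mem_nhds ht)
    rw [hda.deriv]
    have h1 : (0:ℝ) < 1 + S t ^ p := by
      have := Real.rpow_nonneg (hnn t (Set.mem_Ici.mpr (Set.mem_Ioi.mp ht).le)) p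
      linarith
    exact Real.rpow_pos_of_pos h1 _
  intro t ht
  have := hmono (Set.self_mem_Ici) (Set.mem_Ici.mpr ht.le) ht
  rwa [hS0] at this

end SFacts

/-- Along the unified accelerated tensor flow, the energy
`𝓔(t) = cosh_p(C^{1/p}μ^{1/p}t)^p·D_h(x*, Z(t)) + C·t^p·sinhc_p(C^{1/p}μ^{1/p}t)^p·(f(X(t)) − f(x*))`
is monotonically nonincreasing on `[0, ∞)`. -/
theorem unified_accelerated_tensor_flow_lyapunov
    {E : Type*} [NormedAddCommGroup E] [InnerProductSpace ℝ E] [FiniteDimensional ℝ E]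
    (p : ℝ) (hp : 2 ≤ p) (C μ : ℝ) (hC : 0 < C) (hμ : 0 ≤ μ)
    (S : ℝ → ℝ) (hS0 : S 0 = 0)
    (hS : ∀ t ∈ Set.Ici (0 : ℝ),
      HasDerivWithinAt S ((1 + S t ^ p) ^ (1 / p)) (Set.Ici 0) t)
    (coshp sinhcp tanhcp cothcp : ℝ → ℝ)
    (hcoshp : ∀ x, coshp x = (1 + S x ^ p) ^ (1 / p))
    (hsinhcp : ∀ x, sinhcp x = if x = 0 then 1 else S x / x)
    (htanhcp : ∀ x, tanhcp x = sinhcp x / coshp x)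
    (hcothcp : ∀ x, cothcp x = 1 / tanhcp x)
    (h f : E → ℝ)
    (hhconv : ConvexOn ℝ Set.univ h) (hhdiff : Differentiable ℝ h)
    (hfdiff : Differentiable ℝ f)
    (hunif : ∀ x y : E, μ * breg h x y ≤ breg f x y)
    (xstar : E) (hmin : ∀ x, f xstar ≤ f x)
    (X Z : ℝ → E)
    (hXcont : ContinuousOn X (Set.Ici 0)) (hZcont : ContinuousOn Z (Set.Ici 0))
    (hflow1 : ∀ t > (0 : ℝ), HasDerivAt X
      ((p / t * cothcp (C ^ (1 / p) * μ ^ (1 / p) * t)) • (Z t - X t)) t)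
    (hflow2 : ∀ t > (0 : ℝ), HasDerivAt (fun τ => gradient h (Z τ))
      ((C * p * t ^ (p - 1) * tanhcp (C ^ (1 / p) * μ ^ (1 / p) * t) ^ (p - 1)) •
        (μ • gradient h (X t) - μ • gradient h (Z t) - gradient f (X t))) t) :
    AntitoneOn (fun t =>
      coshp (C ^ (1 / p) * μ ^ (1 / p) * t) ^ p * breg h xstar (Z t)
        + C * t ^ p * sinhcp (C ^ (1 / p) * μ ^ (1 / p) * t) ^ p * (f (X t) - f xstar))
      (Set.Ici 0) := by
  have hp0 : (0:ℝ) < p := by linarith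
  have hp0' : p ≠ 0 := ne_of_gt hp0
  have hp1 : (1:ℝ) ≤ p := by linarith
  have hSnn := S_nonneg hp hS0 hS
  have hSpos := S_pos hp hS0 hS
  have hScont : ContinuousOn S (Set.Ici 0) := fun t ht => (hS t ht).continuousWithinAt
  have hgradc : Continuous (gradient h) := grad_continuous hhconv hhdiff
  have hbregZ : ContinuousOn (fun t => breg h xstar (Z t)) (Set.Ici 0) := by
    have : (fun t => breg h xstar (Z t)) =
        fun t => h xstar - h (Z t) - ⟪gradient h (Z t), xstar - Z t⟫ := rfl
    rw [this]
    exact (continuousOn_const.sub (hhdiff.continuous.comp_continuousOn hZcont)).sub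
      ((hgradc.comp_continuousOn hZcont).inner (continuousOn_const.sub hZcont))
  have hfXc : ContinuousOn (fun t => f (X t) - f xstar) (Set.Ici 0) :=
    (hfdiff.continuous.comp_continuousOn hXcont).sub continuousOn_const
  have htpc : Continuous (fun t : ℝ => t ^ p) := by
    rw [continuous_iff_continuousAt]
    exact fun t => Real.continuousAt_rpow_const t p (Or.inr hp0.le)
  have hZat : ∀ t : ℝ, 0 < t → ContinuousAt Z t := fun t ht =>
    (hZcont t (Set.mem_Ici.mpr ht.le)).continuousAt (Ici_mem_nhds ht)
  -- nonpositivity of the common derivative value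
  have hderiv_nonpos : ∀ (t q : ℝ), 0 ≤ q →
      q * (μ * breg h xstar (X t) - μ * breg h (Z t) (X t) - breg f xstar (X t)) ≤ 0 := by
    intro t q hq
    have h1 := hunif xstar (X t)
    have h2 : 0 ≤ breg h (Z t) (X t) := breg_nonneg hhconv hhdiff _ _
    have h3 : 0 ≤ μ * breg h (Z t) (X t) := mul_nonneg hμ h2
    exact mul_nonpos_of_nonneg_of_nonpos hq (by linarith)
  rcases eq_or_lt_of_le hμ with hμ0 | hμpos
  · -- case μ = 0
    have hc0 : ∀ t : ℝ, C ^ (1/p) * μ ^ (1/p) * t = 0 := by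
      intro t
      rw [← hμ0, Real.zero_rpow (one_div_ne_zero hp0'), mul_zero, zero_mul]
    have hcosh0 : coshp 0 = 1 := by
      rw [hcoshp, hS0, Real.zero_rpow hp0', add_zero, Real.one_rpow]
    have hsinh0 : sinhcp 0 = 1 := by rw [hsinhcp]; simp
    have htanh0 : tanhcp 0 = 1 := by rw [htanhcp, hsinh0, hcosh0, div_one]
    have hcoth0 : cothcp 0 = 1 := by rw [hcothcp, htanh0, div_one]
    set G : ℝ → ℝ := fun t => (fun _ : ℝ => (1:ℝ)) t * breg h xstar (Z t)
      + (fun τ : ℝ => C * τ ^ p) t * (f (X t) - f xstar) with hG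
    have hEG : ∀ t : ℝ, coshp (C ^ (1/p) * μ ^ (1/p) * t) ^ p * breg h xstar (Z t)
        + C * t ^ p * sinhcp (C ^ (1/p) * μ ^ (1/p) * t) ^ p * (f (X t) - f xstar) = G t := by
      intro t
      rw [hG, hc0 t, hcosh0, hsinh0, Real.one_rpow]
      ring
    have hGanti : AntitoneOn G (Set.Ici 0) := by
      have hGd : ∀ t ∈ interior (Set.Ici (0:ℝ)),
          HasDerivAt G ((C * p * t ^ (p-1)) * (μ * breg h xstar (X t)
            - μ * breg h (Z t) (X t) - breg f xstar (X t))) t := by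
        intro t ht
        rw [interior_Ici] at ht
        set q : ℝ := C * p * t ^ (p-1) with hqdef
        have htp : (0:ℝ) < t ^ p := Real.rpow_pos_of_pos ht p
        have hψt : C * t ^ p ≠ 0 := ne_of_gt (mul_pos hC htp)
        have htpm : t ^ (p-1) = t ^ p / t := by
          rw [Real.rpow_sub ht, Real.rpow_one]
        refine core_deriv f hhconv hhdiff hfdiff xstar X Z μ t q _ _ ?_ ?_ ?_ ?_ ?_ ?_ ?_
        · rw [← hμ0, zero_mul]; exact hasDerivAt_const t 1
        · have := (Real.hasDerivAt_rpow_const (p := p) (Or.inl (ne_of_gt ht))).const_mul C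
          simpa [hqdef, mul_assoc] using this
        · exact one_ne_zero
        · exact hψt
        · have := hflow2 t ht
          rw [hc0 t, htanh0, Real.one_rpow, mul_one] at this
          have hcoef : q / (1:ℝ) = C * p * t ^ (p-1) := by rw [div_one]
          rw [← hcoef] at this
          exact this
        · have := hflow1 t ht
          rw [hc0 t, hcoth0, mul_one] at this
          have hcoef : q / (C * t ^ p) = p / t := by
            have hC' : C ≠ 0 := ne_of_gt hC
            have ht' : t ≠ 0 := ne_of_gt ht
            have htp' : t ^ p ≠ 0 := ne_of_gt htp
            rw [hqdef, htpm]
            field_simp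
          rw [← hcoef] at this
          exact this
        · exact hZat t ht
      refine antitoneOn_of_deriv_nonpos (convex_Ici 0) ?_ ?_ ?_
      · exact (continuousOn_const.mul hbregZ).add
          ((continuous_const.mul htpc).continuousOn.mul hfXc)
      · intro t ht
        exact (hGd t ht).differentiableAt.differentiableWithinAt
      · intro t ht
        rw [(hGd t ht).deriv]
        refine hderiv_nonpos t _ ?_
        rw [interior_Ici] at ht
        have : (0:ℝ) < t ^ (p-1) := Real.rpow_pos_of_pos ht _
        positivity
    intro a ha b hb hab
    beta_reduce
    rw [hEG a, hEG b]
    exact hGanti ha hb hab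
  · -- case μ > 0
    set c : ℝ := C ^ (1/p) * μ ^ (1/p) with hcdef
    have hc : 0 < c := mul_pos (Real.rpow_pos_of_pos hC _) (Real.rpow_pos_of_pos hμpos _)
    have hcp : c ^ p = C * μ := by
      rw [hcdef, Real.mul_rpow (Real.rpow_nonneg hC.le _) (Real.rpow_nonneg hμpos.le _),
        ← Real.rpow_mul hC.le, ← Real.rpow_mul hμpos.le, one_div_mul_cancel hp0',
        Real.rpow_one, Real.rpow_one]
    set G : ℝ → ℝ := fun t => (fun τ : ℝ => 1 + S (c * τ) ^ p) t * breg h xstar (Z t)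
      + (fun τ : ℝ => S (c * τ) ^ p / μ) t * (f (X t) - f xstar) with hG
    have hEG : ∀ t ∈ Set.Ici (0:ℝ),
        coshp (c * t) ^ p * breg h xstar (Z t)
        + C * t ^ p * sinhcp (c * t) ^ p * (f (X t) - f xstar) = G t := by
      intro t ht
      rw [Set.mem_Ici] at ht
      have hct : 0 ≤ c * t := mul_nonneg hc.le ht
      have hσ : 0 ≤ S (c * t) := hSnn _ (Set.mem_Ici.mpr hct)
      have hbase : (0:ℝ) ≤ 1 + S (c * t) ^ p := by
        have := Real.rpow_nonneg hσ p; linarith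
      have hcosh : coshp (c * t) ^ p = 1 + S (c * t) ^ p := by
        rw [hcoshp, ← Real.rpow_mul hbase, one_div_mul_cancel hp0', Real.rpow_one]
      rw [hG, hcosh]
      rcases eq_or_lt_of_le ht with h0 | htpos
      · rw [← h0]
        simp [hS0, Real.zero_rpow hp0']
      · have hctpos : 0 < c * t := mul_pos hc htpos
        have hsinh : sinhcp (c * t) = S (c * t) / (c * t) := by
          rw [hsinhcp, if_neg (ne_of_gt hctpos)]
        have hsp : C * t ^ p * sinhcp (c * t) ^ p = S (c * t) ^ p / μ := by
          rw [hsinh, Real.div_rpow hσ hctpos.le, Real.mul_rpow hc.le htpos.le, hcp]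
          have htp : (0:ℝ) < t ^ p := Real.rpow_pos_of_pos htpos p
          field_simp
        rw [hsp]
    have hGanti : AntitoneOn G (Set.Ici 0) := by
      have hGd : ∀ t ∈ interior (Set.Ici (0:ℝ)), ∃ q : ℝ, 0 ≤ q ∧
          HasDerivAt G (q * (μ * breg h xstar (X t)
            - μ * breg h (Z t) (X t) - breg f xstar (X t))) t := by
        intro t ht
        rw [interior_Ici] at ht
        have hct : 0 < c * t := mul_pos hc ht
        set σ : ℝ := S (c * t) with hσdef
        have hσpos : 0 < σ := hSpos _ hct
        have hσp : 0 < σ ^ p := Real.rpow_pos_of_pos hσpos p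
        have hbase : (0:ℝ) < 1 + σ ^ p := by linarith
        set κ : ℝ := (1 + σ ^ p) ^ (1/p) with hκdef
        have hκpos : 0 < κ := Real.rpow_pos_of_pos hbase _
        have hκ : coshp (c * t) = κ := by rw [hcoshp]
        set q : ℝ := p * σ ^ (p-1) * κ * c / μ with hqdef
        have hσpm : 0 < σ ^ (p-1) := Real.rpow_pos_of_pos hσpos _
        have hq : 0 ≤ q := by positivity
        -- derivative of τ ↦ S (c τ)
        have hSda : HasDerivAt S κ (c * t) := by
          have := (hS (c*t) (Set.mem_Ici.mpr hct.le)).hasDerivAt (Ici_mem_nhds hct)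
          rwa [← hσdef, ← hκdef] at this
        have hlin : HasDerivAt (fun τ : ℝ => c * τ) c t := by
          simpa using (hasDerivAt_id t).const_mul c
        have hScomp : HasDerivAt (fun τ => S (c * τ)) (κ * c) t := by
          exact HasDerivAt.comp t hSda hlin
        have hpow : HasDerivAt (fun τ => S (c * τ) ^ p) (p * σ ^ (p-1) * (κ * c)) t := by
          have hr := Real.hasDerivAt_rpow_const (x := σ) (p := p) (Or.inr hp1)
          exact HasDerivAt.comp t hr hScomp
        have hφd : HasDerivAt (fun τ : ℝ => 1 + S (c * τ) ^ p) (μ * q) t := by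
          have := hpow.const_add 1
          have heq : μ * q = p * σ ^ (p-1) * (κ * c) := by
            rw [hqdef]; field_simp
          rwa [heq]
        have hψd : HasDerivAt (fun τ : ℝ => S (c * τ) ^ p / μ) q t := by
          have := hpow.div_const μ
          have heq : q = p * σ ^ (p-1) * (κ * c) / μ := by rw [hqdef]; ring
          rwa [heq]
        -- rpow relations
        have hκrel : κ ^ (p - 1) * κ = 1 + σ ^ p := by
          nth_rewrite 2 [← Real.rpow_one κ]
          rw [← Real.rpow_add hκpos, sub_add_cancel, hκdef, ← Real.rpow_mul hbase.le,
            one_div_mul_cancel hp0', Real.rpow_one]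
        have hcrel : c ^ (p - 1) * c = C * μ := by
          nth_rewrite 2 [← Real.rpow_one c]
          rw [← Real.rpow_add hc, sub_add_cancel, hcp]
        have hσrel : σ ^ (p - 1) * σ = σ ^ p := by
          nth_rewrite 2 [← Real.rpow_one σ]
          rw [← Real.rpow_add hσpos, sub_add_cancel]
        have htanh : tanhcp (c * t) = σ / (c * t) / κ := by
          rw [htanhcp, hsinhcp, if_neg (ne_of_gt hct), hκ, ← hσdef]
        have hκpm : 0 < κ ^ (p-1) := Real.rpow_pos_of_pos hκpos _
        have hcpm : 0 < c ^ (p-1) := Real.rpow_pos_of_pos hc _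
        have htpm : 0 < t ^ (p-1) := Real.rpow_pos_of_pos ht _
        have htanhpow : tanhcp (c * t) ^ (p-1)
            = σ ^ (p-1) / (c ^ (p-1) * t ^ (p-1) * κ ^ (p-1)) := by
          rw [htanh, Real.div_rpow (div_nonneg hσpos.le hct.le) hκpos.le,
            Real.div_rpow hσpos.le hct.le, Real.mul_rpow hc.le ht.le, div_div]
        refine ⟨q, hq, ?_⟩
        refine core_deriv f hhconv hhdiff hfdiff xstar X Z μ t q _ _ hφd hψd
          (ne_of_gt hbase) (ne_of_gt (div_pos hσp hμpos)) ?_ ?_ (hZat t ht)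
        · have := hflow2 t ht
          rw [htanhpow] at this
          have hCeq : C = c ^ (p-1) * c / μ := by
            rw [eq_div_iff (ne_of_gt hμpos)]
            linarith [hcrel]
          have hcoef : q / (1 + σ ^ p)
              = C * p * t ^ (p-1) * (σ ^ (p-1) / (c ^ (p-1) * t ^ (p-1) * κ ^ (p-1))) := by
            have h1 : σ ^ (p-1) ≠ 0 := ne_of_gt hσpm
            have h2 : κ ^ (p-1) ≠ 0 := ne_of_gt hκpm
            have h3 : c ^ (p-1) ≠ 0 := ne_of_gt hcpm
            have h4 : t ^ (p-1) ≠ 0 := ne_of_gt htpm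
            have h5 : κ ≠ 0 := ne_of_gt hκpos
            have h6 : c ≠ 0 := ne_of_gt hc
            have h7 : μ ≠ 0 := ne_of_gt hμpos
            rw [hqdef, ← hκrel, hCeq]
            field_simp
          rw [← hcoef] at this
          exact this
        · have := hflow1 t ht
          rw [hcothcp, htanh] at this
          have hcoef : q / (σ ^ p / μ) = p / t * (1 / (σ / (c * t) / κ)) := by
            have h1 : σ ^ (p-1) ≠ 0 := ne_of_gt hσpm
            have h5 : κ ≠ 0 := ne_of_gt hκpos
            have h6 : c ≠ 0 := ne_of_gt hc
            have h7 : μ ≠ 0 := ne_of_gt hμpos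
            have h8 : t ≠ 0 := ne_of_gt ht
            have h9 : σ ≠ 0 := ne_of_gt hσpos
            rw [hqdef, ← hσrel]
            field_simp
          rw [← hcoef] at this
          exact this
      refine antitoneOn_of_deriv_nonpos (convex_Ici 0) ?_ ?_ ?_
      · have hSc : ContinuousOn (fun t : ℝ => S (c * t) ^ p) (Set.Ici 0) := by
          have hmap : Set.MapsTo (fun t : ℝ => c * t) (Set.Ici 0) (Set.Ici 0) :=
            fun t ht => Set.mem_Ici.mpr (mul_nonneg hc.le ht)
          have hSc' : ContinuousOn (fun t : ℝ => S (c * t)) (Set.Ici 0) :=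
            hScont.comp (continuous_const.mul continuous_id).continuousOn hmap
          exact hSc'.rpow_const (fun t ht => Or.inr hp0.le)
        exact ((continuousOn_const.add hSc).mul hbregZ).add
          ((hSc.div_const μ).mul hfXc)
      · intro t ht
        obtain ⟨q, _, hd⟩ := hGd t ht
        exact hd.differentiableAt.differentiableWithinAt
      · intro t ht
        obtain ⟨q, hq, hd⟩ := hGd t ht
        rw [hd.deriv]
        exact hderiv_nonpos t q hq
    intro a ha b hb hab
    beta_reduce
    rw [hEG a ha, hEG b hb]
    exact hGanti ha hb hab
end

section
/- Let E be a finite-dimensional real inner product space, p ≥ 2 a real number, s > 0, M > 0, μ ≥ 0, and C = (1/p)·(M/(p−1))^{p−1}. Let h : E → ℝ be differentiable and 1-uniformly convex of order p, and f : E → ℝ differentiable and μ-uniformly convex with respect to h, with minimizer x*. Let (A_k)_{k≥0} be a strictly increasing sequence of nonnegative reals with A_k > 0 for k ≥ 1, satisfying (A_{k+1} − A_k)^p − C·p^p·s·A_{k+1}^{p−1}·(1 + μ·A_k) ≤ 0 for all k ≥ 0. Let (x_k), (y_k), (z_k) be sequences in E with x₀ = z₀ such that for every k ≥ 0: y_k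 = x_k + ((A_{k+1} − A_k)/A_{k+1})·(z_k − x_k); ⟨∇f(x_{k+1}), y_k − x_{k+1}⟩ ≥ M·s^{1/(p−1)}·‖∇f(x_{k+1})‖^{p/(p−1)}; and ∇h(z_{k+1}) − ∇h(z_k) = ((A_{k+1} − A_k)/(1 + μ·A_k))·(μ·∇h(x_{k+1}) − μ·∇h(z_{k+1}) − ∇f(x_{k+1})). Then for every k ≥ 1, f(x_k) − f(x*) ≤ (1/A_k)·((1 + μ·A₀)·D_h(x*, x₀) + A₀·(f(x₀) − f(x*))). -/
open scoped RealInnerProductSpace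

lemma key_scalar (p s M a A1 β G r : ℝ) (hp : 2 ≤ p) (hs : 0 < s) (hM : 0 < M)
    (ha : 0 < a) (hA1 : 0 < A1) (hβ : 0 < β) (hG : 0 ≤ G) (hr : 0 ≤ r)
    (hcond : a ^ p ≤ (M * (p / (p - 1))) ^ (p - 1) * s * A1 ^ (p - 1) * β) :
    a * G * r ≤ β / p * r ^ p + A1 * (M * s ^ (1 / (p - 1)) * G ^ (p / (p - 1))) := by
  have hp0 : (0:ℝ) < p := by linarith
  have hp1 : (0:ℝ) < p - 1 := by linarith
  set q : ℝ := p / (p - 1) with hq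
  have hq0 : 0 < q := div_pos hp0 hp1
  have hpq : p.HolderConjugate q := Real.holderConjugate_iff.2 ⟨by linarith, by rw [hq]; field_simp; ring⟩
  have hβn : (0:ℝ) ≤ β := hβ.le
  have hy := Real.young_inequality_of_nonneg
    (a := β ^ (1/p) * r) (b := (a*G) * β ^ (-(1/p)))
    (mul_nonneg (Real.rpow_nonneg hβn _) hr)
    (mul_nonneg (mul_nonneg ha.le hG) (Real.rpow_nonneg hβn _)) hpq
  have e0 : (β ^ (1/p) * r) * ((a*G) * β ^ (-(1/p))) = a * G * r := by
    have h1 : β ^ (1/p) * β ^ (-(1/p)) = 1 := by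
      rw [← Real.rpow_add hβ]; norm_num
    calc (β ^ (1/p) * r) * ((a*G) * β ^ (-(1/p)))
        = (β ^ (1/p) * β ^ (-(1/p))) * (a * G * r) := by ring
      _ = a * G * r := by rw [h1]; ring
  have e1 : (β ^ (1/p) * r) ^ p = β * r ^ p := by
    rw [Real.mul_rpow (Real.rpow_nonneg hβn _) hr, ← Real.rpow_mul hβn,
      one_div_mul_cancel hp0.ne', Real.rpow_one]
  have e2 : ((a*G) * β ^ (-(1/p))) ^ q = a ^ q * G ^ q * β ^ (-(1/(p-1))) := by
    rw [Real.mul_rpow (mul_nonneg ha.le hG) (Real.rpow_nonneg hβn _),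
      Real.mul_rpow ha.le hG, ← Real.rpow_mul hβn]
    congr 1
    rw [hq]; field_simp
  rw [e0, e1, e2] at hy
  have hstar : a ^ q * β ^ (-(1/(p-1))) / q ≤ A1 * M * s ^ (1/(p-1)) := by
    have hL : 0 ≤ a ^ q * β ^ (-(1/(p-1))) / q :=
      div_nonneg (mul_nonneg (Real.rpow_nonneg ha.le _) (Real.rpow_nonneg hβn _)) hq0.le
    have hR : 0 ≤ A1 * M * s ^ (1/(p-1)) :=
      mul_nonneg (mul_nonneg hA1.le hM.le) (Real.rpow_nonneg hs.le _)
    rw [← Real.rpow_le_rpow_iff hL hR hp1]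
    have l1 : (a ^ q * β ^ (-(1/(p-1))) / q) ^ (p-1)
        = a ^ p * β⁻¹ * (q ^ (p-1))⁻¹ := by
      rw [div_eq_mul_inv,
        Real.mul_rpow (mul_nonneg (Real.rpow_nonneg ha.le _) (Real.rpow_nonneg hβn _)) (inv_nonneg.2 hq0.le),
        Real.mul_rpow (Real.rpow_nonneg ha.le _) (Real.rpow_nonneg hβn _),
        ← Real.rpow_mul ha.le, ← Real.rpow_mul hβn, Real.inv_rpow hq0.le]
      have eq1 : q * (p-1) = p := by rw [hq]; field_simp
      have eq2 : (-(1/(p-1))) * (p-1) = -1 := by field_simp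
      rw [eq1, eq2, Real.rpow_neg_one]
    have l2 : (A1 * M * s ^ (1/(p-1))) ^ (p-1) = A1 ^ (p-1) * M ^ (p-1) * s := by
      rw [Real.mul_rpow (mul_nonneg hA1.le hM.le) (Real.rpow_nonneg hs.le _),
        Real.mul_rpow hA1.le hM.le, ← Real.rpow_mul hs.le,
        one_div_mul_cancel hp1.ne', Real.rpow_one]
    rw [l1, l2]
    have hMq : (M*q)^(p-1) = M^(p-1) * q^(p-1) := Real.mul_rpow hM.le hq0.le
    rw [hMq] at hcond
    have hqp : 0 < q ^ (p-1) := Real.rpow_pos_of_pos hq0 _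
    calc a^p * β⁻¹ * (q^(p-1))⁻¹
        ≤ (M^(p-1)*q^(p-1)*s*A1^(p-1)*β) * β⁻¹ * (q^(p-1))⁻¹ := by
          apply mul_le_mul_of_nonneg_right
            (mul_le_mul_of_nonneg_right hcond (inv_nonneg.2 hβn)) (inv_nonneg.2 hqp.le)
      _ = A1^(p-1)*M^(p-1)*s := by field_simp
  have hGq : 0 ≤ G ^ q := Real.rpow_nonneg hG q
  have h2 := mul_le_mul_of_nonneg_right hstar hGq
  calc a*G*r ≤ (β * r^p) / p + (a^q * G^q * β^(-(1/(p-1)))) / q := hy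
    _ ≤ (β * r^p)/p + A1*M*s^(1/(p-1)) * G^q := by
        have h2' : a^q * G^q * β^(-(1/(p-1))) / q ≤ A1*M*s^(1/(p-1)) * G^q := by
          calc a^q * G^q * β^(-(1/(p-1))) / q
              = a ^ q * β ^ (-(1/(p-1))) / q * G^q := by ring
            _ ≤ A1*M*s^(1/(p-1)) * G^q := h2
        linarith
    _ = β/p * r^p + A1*(M*s^(1/(p-1))*G^q) := by ring

lemma breg_threept {E : Type*} [NormedAddCommGroup E] [InnerProductSpace ℝ E]
    [CompleteSpace E] (h : E → ℝ) (u a b : E) :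
    ⟪gradient h b - gradient h a, u - b⟫ = breg h u a - breg h u b - breg h b a := by
  simp only [breg, inner_sub_left, inner_sub_right]
  ring

lemma combine_ineq {Ak A1 mu K Gr Q fX fX0 fst P1 P2 P3 P5 PxX PX0X Pzz1
    DxX DX0X DxZ DxZ1 DZ1Z DZ1X Pz1x : ℝ}
    (m1 : (A1-Ak) * (mu * DxX) ≤ (A1-Ak) * (fst - fX - PxX))
    (m2 : Ak * (mu * DX0X) ≤ Ak * (fX0 - fX - PX0X))
    (h3 : A1 * P5 = Ak * PX0X + (A1-Ak) * P3)
    (h4 : (A1-Ak) * Pz1x = (A1-Ak) * mu * (DxX - DxZ1 - DZ1X)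
        + (1+mu*Ak) * (DxZ - DxZ1 - DZ1Z))
    (m5 : (A1-Ak) * Pzz1 ≤ (A1-Ak) * Gr)
    (m6 : A1 * K ≤ A1 * P5)
    (h7 : (A1-Ak) * Gr ≤ (1+mu*Ak) * Q + A1 * K)
    (m8 : (1+mu*Ak) * Q ≤ (1+mu*Ak) * DZ1Z)
    (m9 : 0 ≤ (A1-Ak) * mu * DZ1X)
    (m10 : 0 ≤ Ak * (mu * DX0X))
    (e1 : (A1-Ak) * PxX = (A1-Ak) * (P1 + P2 + P3))
    (e2 : (A1-Ak) * Pz1x = -((A1-Ak) * P1))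
    (e3 : (A1-Ak) * Pzz1 = -((A1-Ak) * P2)) :
    A1 * (fX - fst) + (1+mu*A1) * DxZ1 ≤ Ak * (fX0 - fst) + (1+mu*Ak) * DxZ := by
  linarith [m1,m2,h3,h4,m5,m6,h7,m8,m9,m10,e1,e2,e3]

/-- Convergence rate of the unified accelerated tensor method family: for all `k ≥ 1`,
`f(x_k) − f(x*) ≤ (1/A_k)·((1 + μA₀)·D_h(x*, x₀) + A₀·(f(x₀) − f(x*)))`. -/
theorem unified_accelerated_tensor_method_convergence
    {E : Type*} [NormedAddCommGroup E] [InnerProductSpace ℝ E] [FiniteDimensional ℝ E]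
    (p : ℝ) (hp : 2 ≤ p) (s M μ C : ℝ) (hs : 0 < s) (hM : 0 < M) (hμ : 0 ≤ μ)
    (hC : C = 1 / p * (M / (p - 1)) ^ (p - 1))
    (h f : E → ℝ) (hhdiff : Differentiable ℝ h) (hfdiff : Differentiable ℝ f)
    (huc : ∀ x y : E, h x + ⟪gradient h x, y - x⟫ + 1 / p * ‖y - x‖ ^ p ≤ h y)
    (hunif : ∀ x y : E, μ * breg h x y ≤ breg f x y)
    (xstar : E) (hmin : ∀ x, f xstar ≤ f x)
    (A : ℕ → ℝ) (hA : StrictMono A) (hA0 : 0 ≤ A 0) (hApos : ∀ k ≥ 1, 0 < A k)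
    (hAcond : ∀ k,
      (A (k + 1) - A k) ^ p - C * p ^ p * s * A (k + 1) ^ (p - 1) * (1 + μ * A k) ≤ 0)
    (x y z : ℕ → E) (hinit : x 0 = z 0)
    (hy : ∀ k, y k = x k + ((A (k + 1) - A k) / A (k + 1)) • (z k - x k))
    (hG : ∀ k, M * s ^ (1 / (p - 1)) * ‖gradient f (x (k + 1))‖ ^ (p / (p - 1)) ≤
      ⟪gradient f (x (k + 1)), y k - x (k + 1)⟫)
    (hz : ∀ k, gradient h (z (k + 1)) - gradient h (z k) =
      ((A (k + 1) - A k) / (1 + μ * A k)) •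
        (μ • gradient h (x (k + 1)) - μ • gradient h (z (k + 1))
          - gradient f (x (k + 1)))) :
    ∀ k ≥ 1, f (x k) - f xstar ≤
      (1 / A k) * ((1 + μ * A 0) * breg h xstar (x 0) + A 0 * (f (x 0) - f xstar)) := by
  have hp0 : (0:ℝ) < p := by linarith
  have hp1 : (0:ℝ) < p - 1 := by linarith
  -- breg h lower bound and nonnegativity
  have hD : ∀ u v : E, 1/p * ‖u - v‖ ^ p ≤ breg h u v := by
    intro u v
    have := huc v u
    simp only [breg]
    linarith
  have hDnn : ∀ u v : E, 0 ≤ breg h u v := by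
    intro u v
    have h1 : 0 ≤ 1/p * ‖u - v‖ ^ p :=
      mul_nonneg (by positivity) (Real.rpow_nonneg (norm_nonneg _) _)
    linarith [hD u v]
  -- rewrite the constant
  have hCpp : C * p ^ p = (M * (p / (p - 1))) ^ (p - 1) := by
    rw [hC, Real.mul_rpow hM.le (le_of_lt (div_pos hp0 hp1)),
      Real.div_rpow hM.le hp1.le, Real.div_rpow hp0.le hp1.le]
    have hpp : p ^ p = p ^ (p-1) * p := by
      rw [← Real.rpow_add_one hp0.ne']
      norm_num
    rw [hpp]
    have h1 : (0:ℝ) < (p-1) ^ (p-1) := Real.rpow_pos_of_pos hp1 _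
    field_simp
  -- Lyapunov function
  have hAnn : ∀ k, 0 ≤ A k := fun k => le_trans hA0 (hA.monotone (Nat.zero_le k))
  have key : ∀ k : ℕ,
      A (k+1) * (f (x (k+1)) - f xstar) + (1 + μ * A (k+1)) * breg h xstar (z (k+1)) ≤
      A k * (f (x k) - f xstar) + (1 + μ * A k) * breg h xstar (z k) := by
    intro k
    have hA1 : 0 < A (k+1) := hApos _ (by omega)
    have ha : 0 < A (k+1) - A k := sub_pos.2 (hA (Nat.lt_succ_self k))
    have hβ : 0 < 1 + μ * A k := by nlinarith [mul_nonneg hμ (hAnn k)]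
    set g : E := gradient f (x (k+1)) with hg
    have h1 : μ * breg h xstar (x (k+1)) ≤
        f xstar - f (x (k+1)) - ⟪g, xstar - x (k+1)⟫ := by
      have := hunif xstar (x (k+1))
      rwa [show breg f xstar (x (k+1)) =
        f xstar - f (x (k+1)) - ⟪g, xstar - x (k+1)⟫ from rfl] at this
    have h2 : μ * breg h (x k) (x (k+1)) ≤
        f (x k) - f (x (k+1)) - ⟪g, x k - x (k+1)⟫ := by
      have := hunif (x k) (x (k+1))
      rwa [show breg f (x k) (x (k+1)) =
        f (x k) - f (x (k+1)) - ⟪g, x k - x (k+1)⟫ from rfl] at this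
    have h3 : A (k+1) * ⟪g, y k - x (k+1)⟫ =
        A k * ⟪g, x k - x (k+1)⟫ + (A (k+1) - A k) * ⟪g, z k - x (k+1)⟫ := by
      rw [hy k]
      simp only [inner_add_right, inner_sub_right, real_inner_smul_right]
      field_simp
      ring
    have t1 := breg_threept h xstar (z k) (z (k+1))
    have t2 := breg_threept h xstar (x (k+1)) (z (k+1))
    have h4 : (A (k+1) - A k) * ⟪g, z (k+1) - xstar⟫ =
        (A (k+1) - A k) * μ *
          (breg h xstar (x (k+1)) - breg h xstar (z (k+1)) - breg h (z (k+1)) (x (k+1)))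
        + (1 + μ * A k) *
          (breg h xstar (z k) - breg h xstar (z (k+1)) - breg h (z (k+1)) (z k)) := by
      have e := congrArg (fun v : E => ⟪v, xstar - z (k+1)⟫) (hz k)
      simp only [inner_sub_left, real_inner_smul_left] at e
      simp only [inner_sub_left] at t1 t2
      have hβ' : (1 + μ * A k) ≠ 0 := hβ.ne'
      field_simp at e
      rw [eq_div_iff (by rw [mul_comm (A k) μ]; exact hβ')] at e
      simp only [inner_sub_right] at e t1 t2 ⊢
      linear_combination (1 + μ * A k) * t1 + (A (k+1) - A k) * μ * t2 - e
    have h5 : ⟪g, z k - z (k+1)⟫ ≤ ‖g‖ * ‖z k - z (k+1)‖ := real_inner_le_norm _ _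
    have h6 := hG k
    rw [← hg] at h6
    have hcond : (A (k+1) - A k) ^ p ≤
        (M * (p / (p - 1))) ^ (p - 1) * s * A (k+1) ^ (p - 1) * (1 + μ * A k) := by
      have := hAcond k
      rw [← hCpp]
      nlinarith [this]
    have h7 := key_scalar p s M (A (k+1) - A k) (A (k+1)) (1 + μ * A k)
      ‖g‖ ‖z k - z (k+1)‖ hp hs hM ha hA1 hβ (norm_nonneg _) (norm_nonneg _) hcond
    have h8 : 1/p * ‖z k - z (k+1)‖ ^ p ≤ breg h (z (k+1)) (z k) := by
      have := hD (z (k+1)) (z k)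
      rwa [norm_sub_rev] at this
    have m1 := mul_le_mul_of_nonneg_left h1 ha.le
    have m2 := mul_le_mul_of_nonneg_left h2 (hAnn k)
    have m5 := mul_le_mul_of_nonneg_left h5 ha.le
    have m6 := mul_le_mul_of_nonneg_left h6 hA1.le
    have m8 := mul_le_mul_of_nonneg_left h8 hβ.le
    have m9 : 0 ≤ (A (k+1) - A k) * μ * breg h (z (k+1)) (x (k+1)) :=
      mul_nonneg (mul_nonneg ha.le hμ) (hDnn _ _)
    have m10 : 0 ≤ A k * (μ * breg h (x k) (x (k+1))) :=
      mul_nonneg (hAnn k) (mul_nonneg hμ (hDnn _ _))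
    have e1 : (A (k+1) - A k) * ⟪g, xstar - x (k+1)⟫ =
        (A (k+1) - A k) * (⟪g, xstar - z (k+1)⟫ + ⟪g, z (k+1) - z k⟫ + ⟪g, z k - x (k+1)⟫) := by
      simp only [inner_sub_right]; ring
    have e2 : (A (k+1) - A k) * ⟪g, z (k+1) - xstar⟫ =
        -((A (k+1) - A k) * ⟪g, xstar - z (k+1)⟫) := by
      simp only [inner_sub_right]; ring
    have e3 : (A (k+1) - A k) * ⟪g, z k - z (k+1)⟫ =
        -((A (k+1) - A k) * ⟪g, z (k+1) - z k⟫) := by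
      simp only [inner_sub_right]; ring
    have m5' : (A (k+1) - A k) * ⟪g, z k - z (k+1)⟫ ≤
        (A (k+1) - A k) * (‖g‖ * ‖z k - z (k+1)‖) := m5
    have h7' : (A (k+1) - A k) * (‖g‖ * ‖z k - z (k+1)‖) ≤
        (1 + μ * A k) * (1/p * ‖z k - z (k+1)‖ ^ p)
        + A (k+1) * (M * s ^ (1 / (p - 1)) * ‖g‖ ^ (p / (p - 1))) := by
      calc (A (k+1) - A k) * (‖g‖ * ‖z k - z (k+1)‖)
          = (A (k+1) - A k) * ‖g‖ * ‖z k - z (k+1)‖ := by ring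
        _ ≤ (1 + μ * A k) / p * ‖z k - z (k+1)‖ ^ p
            + A (k+1) * (M * s ^ (1 / (p - 1)) * ‖g‖ ^ (p / (p - 1))) := h7
        _ = _ := by ring
    exact combine_ineq m1 m2 h3 h4 m5' m6 h7' m8 m9 m10 e1 e2 e3
  have hmono : ∀ k : ℕ,
      A k * (f (x k) - f xstar) + (1 + μ * A k) * breg h xstar (z k) ≤
      A 0 * (f (x 0) - f xstar) + (1 + μ * A 0) * breg h xstar (z 0) := by
    intro k
    induction k with
    | zero => exact le_refl _
    | succ n ih => exact le_trans (key n) ih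
  intro k hk
  have hAk : 0 < A k := hApos k hk
  have hβk : 0 < 1 + μ * A k := by nlinarith [mul_nonneg hμ (hAnn k)]
  have h1 : A k * (f (x k) - f xstar) ≤
      A 0 * (f (x 0) - f xstar) + (1 + μ * A 0) * breg h xstar (z 0) := by
    have h2 : 0 ≤ (1 + μ * A k) * breg h xstar (z k) := mul_nonneg hβk.le (hDnn _ _)
    linarith [hmono k]
  rw [← hinit] at h1
  have h4 : f (x k) - f xstar ≤
      (A 0 * (f (x 0) - f xstar) + (1 + μ * A 0) * breg h xstar (x 0)) / A k := by
    rw [le_div_iff₀ hAk]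
    linarith
  calc f (x k) - f xstar
      ≤ (A 0 * (f (x 0) - f xstar) + (1 + μ * A 0) * breg h xstar (x 0)) / A k := h4
    _ = (1 / A k) * ((1 + μ * A 0) * breg h xstar (x 0) + A 0 * (f (x 0) - f xstar)) := by
        ring
end
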